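/- arXiv:1907.01948 — 2 statements merged into one kernel-verified Lean document; each statement's English description precedes it below -/
import Mathlib

section
/- Let ν ≥ 0, α ≥ 1, and r > 0. The function F(η) = η^α · I_ν'(η⁻¹ r) / I_ν(η⁻¹ r) is strictly monotonically increasing in η on (0, ∞). -/
open Real Finset

noncomputable def bT (μ : ℝ) (k : ℕ) : ℝ := 1 / (k.factorial * Real.Gamma (μ + k + 1))

noncomputable def bS (μ : ℝ) (y : ℝ) : ℝ := ∑' k : ℕ, bT μ k * y ^ k
noncomputable def bP (ν : ℝ) (j : ℕ) : ℝ := ∏ i ∈ range j, (ν + i + 1)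

lemma bT_pos (μ : ℝ) (hμ : 0 ≤ μ) (k : ℕ) : 0 < bT μ k := by
  have h1 : (0:ℝ) < Real.Gamma (μ + k + 1) := Real.Gamma_pos_of_pos (by positivity)
  have h2 : (0:ℝ) < k.factorial := by positivity
  rw [bT]; positivity

lemma gamma_prod (μ : ℝ) (hμ : 0 ≤ μ) (k : ℕ) :
    Real.Gamma (μ + k + 1) = Real.Gamma (μ + 1) * ∏ j ∈ range k, (μ + j + 1) := by
  induction k with
  | zero => simp
  | succ n ih =>
    have h1 : (μ + (n+1 : ℕ) + 1 : ℝ) = (μ + n + 1) + 1 := by push_cast; ring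
    rw [h1, Real.Gamma_add_one (by positivity), ih, prod_range_succ]
    ring

lemma gamma_ge (μ : ℝ) (hμ : 0 ≤ μ) (k : ℕ) :
    Real.Gamma (μ + 1) * k.factorial ≤ Real.Gamma (μ + k + 1) := by
  rw [gamma_prod μ hμ k]
  have hg : 0 < Real.Gamma (μ + 1) := Real.Gamma_pos_of_pos (by positivity)
  have : (k.factorial : ℝ) ≤ ∏ j ∈ range k, (μ + j + 1) := by
    rw [← Finset.prod_range_add_one_eq_factorial]
    push_cast
    apply Finset.prod_le_prod
    · intro i _; positivity
    · intro i _; linarith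
  nlinarith

lemma bT_le (μ : ℝ) (hμ : 0 ≤ μ) (k : ℕ) :
    bT μ k ≤ (1 / Real.Gamma (μ + 1)) / (k.factorial * k.factorial) := by
  have hg : 0 < Real.Gamma (μ + 1) := Real.Gamma_pos_of_pos (by positivity)
  have h2 : (0:ℝ) < k.factorial := by positivity
  have h := gamma_ge μ hμ k
  have key : (1:ℝ) / (k.factorial * Real.Gamma (μ + k + 1)) ≤
      1 / (Real.Gamma (μ + 1) * (k.factorial * k.factorial)) := by
    apply one_div_le_one_div_of_le (by positivity)
    nlinarith
  calc bT μ k ≤ 1 / (Real.Gamma (μ + 1) * (k.factorial * k.factorial)) := key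
    _ = (1 / Real.Gamma (μ + 1)) / (k.factorial * k.factorial) := by
        rw [div_div]

lemma summable_norm_bS (μ : ℝ) (hμ : 0 ≤ μ) (y : ℝ) :
    Summable (fun k : ℕ => ‖bT μ k * y ^ k‖) := by
  refine Summable.of_nonneg_of_le (fun k => norm_nonneg _) (fun k => ?_)
    ((Real.summable_pow_div_factorial |y|).mul_left (1 / Real.Gamma (μ + 1)))
  ·
    have h1 := bT_le μ hμ k
    have h2 := bT_pos μ hμ k
    have hf : (1:ℝ) ≤ k.factorial := by exact_mod_cast Nat.one_le_iff_ne_zero.mpr k.factorial_ne_zero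
    rw [norm_mul, norm_pow, Real.norm_eq_abs, Real.norm_eq_abs, abs_of_pos h2]
    have : bT μ k ≤ (1 / Real.Gamma (μ + 1)) / k.factorial := by
      refine h1.trans ?_
      apply div_le_div_of_nonneg_left _ (by positivity) (by nlinarith)
      have hg : 0 < Real.Gamma (μ + 1) := Real.Gamma_pos_of_pos (by positivity)
      positivity
    calc bT μ k * |y| ^ k ≤ ((1 / Real.Gamma (μ + 1)) / k.factorial) * |y| ^ k := by
          apply mul_le_mul_of_nonneg_right this (by positivity)
      _ = (1 / Real.Gamma (μ + 1)) * (|y| ^ k / k.factorial) := by ring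

lemma summable_bS (μ : ℝ) (hμ : 0 ≤ μ) (y : ℝ) :
    Summable (fun k : ℕ => bT μ k * y ^ k) :=
  (summable_norm_bS μ hμ y).of_norm

lemma summable_deriv_bound (μ : ℝ) (hμ : 0 ≤ μ) (R : ℝ) (hR : 0 ≤ R) :
    Summable (fun k : ℕ => bT μ k * ((k : ℝ) * R ^ (k - 1))) := by
  rw [← summable_nat_add_iff 1]
  refine Summable.of_nonneg_of_le
    (fun k => by have := bT_pos μ hμ (k+1); positivity) (fun k => ?_)
    ((Real.summable_pow_div_factorial R).mul_left (1 / Real.Gamma (μ + 1)))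
  ·
    simp only [Nat.add_sub_cancel]
    have h1 := bT_le μ hμ (k+1)
    have hfk : (0:ℝ) < k.factorial := by positivity
    have hfk1 : (0:ℝ) < (k+1).factorial := by positivity
    have hfact : ((k+1).factorial : ℝ) = (k+1) * k.factorial := by
      rw [Nat.factorial_succ]; push_cast; ring
    have hK1 : (1:ℝ) ≤ (k+1).factorial := by
      exact_mod_cast Nat.one_le_iff_ne_zero.mpr (k+1).factorial_ne_zero
    have step : bT μ (k+1) * ((k:ℝ)+1) ≤ (1 / Real.Gamma (μ + 1)) / k.factorial := by
      have := mul_le_mul_of_nonneg_right h1 (show (0:ℝ) ≤ (k:ℝ)+1 by positivity)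
      refine this.trans ?_
      rw [hfact]
      have hg : 0 < Real.Gamma (μ + 1) := Real.Gamma_pos_of_pos (by positivity)
      rw [div_mul_eq_mul_div, div_le_div_iff₀ (by positivity) (by positivity)]
      have expand : ((k:ℝ)+1) * k.factorial * (((k:ℝ)+1) * k.factorial) ≥
          ((k:ℝ)+1) * (k.factorial) := by nlinarith
      calc (1 / Real.Gamma (μ+1)) * ((k:ℝ)+1) * (k.factorial:ℝ)
          = (1 / Real.Gamma (μ+1)) * (((k:ℝ)+1) * k.factorial) := by ring
        _ ≤ (1 / Real.Gamma (μ+1)) * (((k:ℝ)+1) * k.factorial * (((k:ℝ)+1) * k.factorial)) := by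
            have h0 : (0:ℝ) ≤ 1 / Real.Gamma (μ+1) := by positivity
            nlinarith [mul_le_mul_of_nonneg_left expand h0]
    have hRk : (0:ℝ) ≤ R ^ k := by positivity
    push_cast
    calc bT μ (k+1) * (((k:ℝ)+1) * R ^ k) = (bT μ (k+1) * ((k:ℝ)+1)) * R ^ k := by ring
      _ ≤ ((1 / Real.Gamma (μ + 1)) / k.factorial) * R ^ k := by
          exact mul_le_mul_of_nonneg_right step hRk
      _ = (1 / Real.Gamma (μ + 1)) * (R ^ k / k.factorial) := by ring

lemma bT_succ (μ : ℝ) (hμ : 0 ≤ μ) (j : ℕ) :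
    bT μ (j+1) * ((j:ℝ)+1) = bT (μ+1) j := by
  have h1 : ((j+1).factorial : ℝ) = (j+1) * j.factorial := by
    rw [Nat.factorial_succ]; push_cast; ring
  have h2 : (μ + (j+1:ℕ) + 1 : ℝ) = (μ + 1) + j + 1 := by push_cast; ring
  have hg : 0 < Real.Gamma ((μ+1) + j + 1) := Real.Gamma_pos_of_pos (by positivity)
  have hf : (0:ℝ) < j.factorial := by positivity
  rw [bT, bT, h2, h1]
  field_simp

lemma bS_pos (μ : ℝ) (hμ : 0 ≤ μ) (y : ℝ) (hy : 0 ≤ y) : 0 < bS μ y := by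
  apply Summable.tsum_pos (summable_bS μ hμ y) (fun k => ?_) 0
  · simpa using bT_pos μ hμ 0
  · have := bT_pos μ hμ k
    positivity

lemma hasDerivAt_bS (μ : ℝ) (hμ : 0 ≤ μ) (y : ℝ) :
    HasDerivAt (bS μ) (bS (μ+1) y) y := by
  set R : ℝ := |y| + 1 with hR
  have hR0 : (0:ℝ) ≤ R := by positivity
  have hyt : y ∈ Set.Ioo (-R) R := by
    constructor <;> cases abs_cases y <;> simp [hR] <;> linarith
  have key : HasDerivAt (fun z => ∑' k : ℕ, bT μ k * z ^ k)
      (∑' k : ℕ, bT μ k * ((k:ℝ) * y ^ (k-1))) y := by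
    apply hasDerivAt_tsum_of_isPreconnected (summable_deriv_bound μ hμ R hR0)
      isOpen_Ioo (convex_Ioo _ _).isPreconnected
      (g' := fun k z => bT μ k * ((k:ℝ) * z ^ (k-1)))
      (fun k z _ => (hasDerivAt_pow k z).const_mul _) ?_ hyt
      (summable_bS μ hμ y) hyt
    · intro k z hz
      have hzR : |z| ≤ R := by
        rw [abs_le]; exact ⟨hz.1.le, hz.2.le⟩
      have h2 := bT_pos μ hμ k
      rw [norm_mul, norm_mul, norm_pow, Real.norm_eq_abs, Real.norm_eq_abs,
        Real.norm_eq_abs, abs_of_pos h2, abs_of_nonneg (by positivity : (0:ℝ) ≤ (k:ℝ))]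
      have : |z| ^ (k-1) ≤ R ^ (k-1) := pow_le_pow_left₀ (abs_nonneg z) hzR _
      exact mul_le_mul_of_nonneg_left (mul_le_mul_of_nonneg_left this (by positivity)) h2.le
  have sum_eq : (∑' k : ℕ, bT μ k * ((k:ℝ) * y ^ (k-1))) = bS (μ+1) y := by
    have hsum : Summable (fun k : ℕ => bT μ k * ((k:ℝ) * y ^ (k-1))) := by
      refine Summable.of_norm ?_
      apply Summable.of_nonneg_of_le (fun k => norm_nonneg _) (fun k => ?_)
        (summable_deriv_bound μ hμ R hR0)
      have h2 := bT_pos μ hμ k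
      have hyR : |y| ≤ R := by simp [hR]
      rw [norm_mul, norm_mul, norm_pow, Real.norm_eq_abs, Real.norm_eq_abs,
        Real.norm_eq_abs, abs_of_pos h2, abs_of_nonneg (by positivity : (0:ℝ) ≤ (k:ℝ))]
      have : |y| ^ (k-1) ≤ R ^ (k-1) := pow_le_pow_left₀ (abs_nonneg y) hyR _
      exact mul_le_mul_of_nonneg_left (mul_le_mul_of_nonneg_left this (by positivity)) h2.le
    rw [hsum.tsum_eq_zero_add]
    simp only [Nat.cast_zero, zero_mul, mul_zero, zero_add]
    rw [bS]
    apply tsum_congr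
    intro j
    have : bT μ (j+1) * (((j+1:ℕ):ℝ) * y ^ (j+1-1)) = (bT μ (j+1) * ((j:ℝ)+1)) * y ^ j := by
      push_cast; ring_nf
    rw [this, bT_succ μ hμ j]
  rw [← sum_eq]
  exact key

lemma bP_pos (ν : ℝ) (hν : 0 ≤ ν) (j : ℕ) : 0 < bP ν j :=
  Finset.prod_pos (fun i _ => by positivity)

lemma bP_succ (ν : ℝ) (j : ℕ) : bP ν (j+1) = bP ν j * (ν + j + 1) := prod_range_succ _ _

lemma bP_shift (ν : ℝ) (k : ℕ) : bP ν (k+1) = (ν + 1) * bP (ν+1) k := by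
  rw [bP, prod_range_succ']
  simp only [Nat.cast_zero]
  rw [bP]
  rw [show (∏ i ∈ range k, (ν + ↑(i + 1) + 1)) = ∏ i ∈ range k, ((ν+1) + ↑i + 1) from
    prod_congr rfl (fun i _ => by push_cast; ring)]
  ring

lemma bT_eq (ν : ℝ) (hν : 0 ≤ ν) (k : ℕ) :
    bT ν k = (1 / Real.Gamma (ν+1)) * (1 / (k.factorial * bP ν k)) := by
  rw [bT, gamma_prod ν hν k, ← bP]
  have hg : 0 < Real.Gamma (ν + 1) := Real.Gamma_pos_of_pos (by positivity)
  have := bP_pos ν hν k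
  have : (0:ℝ) < k.factorial := by positivity
  field_simp

lemma bT1_eq (ν : ℝ) (hν : 0 ≤ ν) (k : ℕ) :
    bT (ν+1) k = (1 / Real.Gamma (ν+1)) * (1 / (k.factorial * bP ν (k+1))) := by
  rw [bT_eq (ν+1) (by linarith) k, bP_shift]
  have hg : 0 < Real.Gamma (ν + 1) := Real.Gamma_pos_of_pos (by positivity)
  rw [Real.Gamma_add_one (by positivity : ν + 1 ≠ 0)]
  have := bP_pos (ν+1) (by linarith) k
  have : (0:ℝ) < k.factorial := by positivity
  field_simp

lemma bT2_eq (ν : ℝ) (hν : 0 ≤ ν) (k : ℕ) :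
    bT (ν+2) k = (1 / Real.Gamma (ν+1)) * (1 / (k.factorial * bP ν (k+2))) := by
  have h : (ν + 2 : ℝ) = (ν + 1) + 1 := by ring
  rw [h, bT1_eq (ν+1) (by linarith) k]
  rw [show bP ν (k+2) = (ν+1) * bP (ν+1) (k+1) from bP_shift ν (k+1)]
  have hg : 0 < Real.Gamma (ν + 1) := Real.Gamma_pos_of_pos (by positivity)
  rw [Real.Gamma_add_one (by positivity : ν + 1 ≠ 0)]
  have := bP_pos (ν+1) (by linarith) (k+1)
  have : (0:ℝ) < k.factorial := by positivity
  have hν1 : (0:ℝ) < ν + 1 := by linarith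
  field_simp

set_option maxHeartbeats 1600000 in
lemma coeff_le (ν : ℝ) (hν : 0 ≤ ν) (n : ℕ) :
    ∑ k ∈ range (n+1), bT ν k * bT (ν+2) (n-k) ≤
    ∑ k ∈ range (n+1), bT (ν+1) k * bT (ν+1) (n-k) := by
  set c : ℝ := 1 / Real.Gamma (ν+1) with hc
  have hgpos : 0 < Real.Gamma (ν+1) := Real.Gamma_pos_of_pos (show (0:ℝ) < ν + 1 by linarith)
  have hg0 : Real.Gamma (ν+1) ≠ 0 := ne_of_gt hgpos
  have hg0' : Real.Gamma (1+ν) ≠ 0 := by rwa [add_comm]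
  have hcpos : 0 < c := by positivity
  set W : ℕ → ℝ := fun j => if j ≤ n then 1/((j.factorial : ℝ) * (n-j).factorial) else 0
    with hW
  set G : ℕ → ℝ := fun j => (1 / bP ν j) * (1 / bP ν (n+2-j)) with hG
  -- step 1: rewrite both sums
  have hterm1 : ∀ k ∈ range (n+1),
      bT (ν+1) k * bT (ν+1) (n-k) = c^2 * (W k * G (k+1)) := by
    intro k hk
    rw [mem_range] at hk
    have hkn : k ≤ n := by omega
    rw [bT1_eq ν hν, bT1_eq ν hν]
    simp only [hW, hG, if_pos hkn]
    rw [show n + 2 - (k+1) = (n-k) + 1 by omega]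
    have p1 := bP_pos ν hν (k+1)
    have p2 := bP_pos ν hν ((n-k)+1)
    have f1 : (0:ℝ) < k.factorial := by positivity
    have f2 : (0:ℝ) < (n-k).factorial := by positivity
    rw [hc]
    have h1ν : Real.Gamma (ν+1) = Real.Gamma (1+ν) := by rw [add_comm]
    rw [h1ν]
    field_simp
  have hterm2 : ∀ k ∈ range (n+1),
      bT ν k * bT (ν+2) (n-k) = c^2 * (W k * G k) := by
    intro k hk
    rw [mem_range] at hk
    have hkn : k ≤ n := by omega
    rw [bT_eq ν hν, bT2_eq ν hν]
    simp only [hW, hG, if_pos hkn]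
    rw [show n + 2 - k = (n-k) + 2 by omega]
    have p1 := bP_pos ν hν k
    have p2 := bP_pos ν hν ((n-k)+2)
    have f1 : (0:ℝ) < k.factorial := by positivity
    have f2 : (0:ℝ) < (n-k).factorial := by positivity
    rw [hc]
    have h1ν : Real.Gamma (ν+1) = Real.Gamma (1+ν) := by rw [add_comm]
    rw [h1ν]
    field_simp
  rw [Finset.sum_congr rfl hterm1, Finset.sum_congr rfl hterm2, ← Finset.mul_sum,
    ← Finset.mul_sum]
  apply mul_le_mul_of_nonneg_left _ (by positivity)
  -- step 2: show ∑ W k * G k ≤ ∑ W k * G (k+1)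
  rw [← sub_nonneg, ← Finset.sum_sub_distrib]
  have hext : ∑ k ∈ range (n+1), (W k * G (k+1) - W k * G k)
      = ∑ k ∈ range (n+2), (W k * G (k+1) - W k * G k) := by
    rw [Finset.sum_range_succ (n := n+1)]
    have : W (n+1) = 0 := by simp [hW]
    rw [this]; ring
  rw [hext]
  set E : ℕ → ℝ := fun j => (if j = 0 then 0 else W (j-1)) - W j with hE
  have hshift : ∑ k ∈ range (n+2), W k * G (k+1)
      = ∑ j ∈ range (n+2), (if j = 0 then 0 else W (j-1)) * G j := by
    have h1 : ∑ j ∈ range (n+3), (if j = 0 then 0 else W (j-1)) * G j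
        = ∑ k ∈ range (n+2), W k * G (k+1) := by
      rw [Finset.sum_range_succ' (fun j => (if j = 0 then 0 else W (j-1)) * G j) (n+2)]
      simp
    have h2 : ∑ j ∈ range (n+3), (if j = 0 then 0 else W (j-1)) * G j
        = ∑ j ∈ range (n+2), (if j = 0 then 0 else W (j-1)) * G j := by
      rw [Finset.sum_range_succ]
      have : W (n+1) = 0 := by simp [hW]
      simp [this]
    rw [← h1, h2]
  have hEG : ∑ k ∈ range (n+2), (W k * G (k+1) - W k * G k)
      = ∑ j ∈ range (n+2), E j * G j := by
    rw [Finset.sum_sub_distrib, hshift, ← Finset.sum_sub_distrib]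
    exact Finset.sum_congr rfl (fun j _ => by simp only [hE]; ring)
  rw [hEG]
  -- step 3: symmetry facts
  have Wsym : ∀ j, j ≤ n → W j = W (n - j) := by
    intro j hj
    simp only [hW, if_pos hj, if_pos (show n - j ≤ n by omega)]
    rw [show n - (n-j) = j by omega, mul_comm]
  have hEanti : ∀ j, j ≤ n+1 → E (n+1-j) = - E j := by
    intro j hj
    rcases Nat.eq_zero_or_pos j with rfl | hj1
    · simp only [hE, Nat.sub_zero, if_neg (Nat.succ_ne_zero n), if_pos rfl]
      rw [show n+1-1 = n by omega]
      have h0 : W (n+1) = 0 := by simp [hW]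
      rw [h0, Wsym 0 (by omega), Nat.sub_zero]
      norm_num
    rcases Nat.eq_or_lt_of_le hj with rfl | hjn
    · rw [Nat.sub_self]
      simp only [hE, if_pos rfl, if_neg (by omega : ¬ (n+1) = 0)]
      rw [show n+1-1 = n by omega]
      have h0 : W (n+1) = 0 := by simp [hW]
      rw [h0, Wsym 0 (by omega), Nat.sub_zero]
      simp
    · -- 1 ≤ j ≤ n
      have hjn' : j ≤ n := by omega
      simp only [hE, if_neg (by omega : ¬ (n+1-j) = 0), if_neg (by omega : ¬ j = 0)]
      rw [show n+1-j-1 = n-j by omega]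
      rw [← Wsym j hjn']
      rw [show n+1-j = n - (j-1) by omega, ← Wsym (j-1) (by omega)]
      ring
  have hGsym : ∀ j, j ≤ n+1 → G (n+1-j) = G (j+1) := by
    intro j hj
    simp only [hG]
    rw [show n+2-(n+1-j) = j+1 by omega, show n+2-(j+1) = n+1-j by omega, mul_comm]
  -- step 4: reflect
  have hrefl : ∑ j ∈ range (n+2), E j * G j
      = ∑ j ∈ range (n+2), - (E j * G (j+1)) := by
    rw [← Finset.sum_range_reflect (fun j => E j * G j) (n+2)]
    apply Finset.sum_congr rfl
    intro j hj
    rw [mem_range] at hj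
    have hj' : j ≤ n+1 := by omega
    rw [show n+2-1-j = n+1-j by omega, hEanti j hj', hGsym j hj']
    ring
  have htwice : (2:ℝ) * ∑ j ∈ range (n+2), E j * G j
      = ∑ j ∈ range (n+2), E j * (G j - G (j+1)) := by
    rw [two_mul]
    nth_rewrite 2 [hrefl]
    rw [← Finset.sum_add_distrib]
    exact Finset.sum_congr rfl (fun j _ => by ring)
  have hterm_nonneg : ∀ j ∈ range (n+2), 0 ≤ E j * (G j - G (j+1)) := by
    intro j hj
    rw [mem_range] at hj
    have hj' : j ≤ n+1 := by omega
    -- identity for E j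
    have hEid : E j = (2*(j:ℝ) - n - 1) / (j.factorial * (n+1-j).factorial) := by
      rcases Nat.eq_zero_or_pos j with rfl | hj1
      · simp only [hE, if_pos rfl, hW, if_pos (Nat.zero_le n), Nat.sub_zero, if_true]
        have : ((n+1).factorial : ℝ) = (n+1) * n.factorial := by
          rw [Nat.factorial_succ]; push_cast; ring
        rw [this]
        have : (0:ℝ) < n.factorial := by positivity
        field_simp
        ring
      rcases Nat.eq_or_lt_of_le hj' with rfl | hjn
      · simp only [hE, if_neg (by omega : ¬ (n+1) = 0), Nat.sub_self, Nat.factorial_zero]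
        have h0 : W (n+1) = 0 := by simp [hW]
        rw [h0, show n+1-1 = n by omega]
        simp only [hW, if_pos (le_refl n), Nat.sub_self, Nat.factorial_zero]
        rw [Nat.factorial_succ]
        have hfn : (0:ℝ) < n.factorial := by positivity
        push_cast
        field_simp
        ring
      · obtain ⟨a, rfl⟩ : ∃ a, j = a + 1 := ⟨j - 1, by omega⟩
        obtain ⟨b, rfl⟩ : ∃ b, n = a + 1 + b := ⟨n - a - 1, by omega⟩
        simp only [hE, if_neg (Nat.succ_ne_zero a), Nat.add_sub_cancel, hW,
          if_pos (show a ≤ a+1+b by omega), if_pos (show a+1 ≤ a+1+b by omega)]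
        rw [show a+1+b-a = b+1 by omega, show a+1+b-(a+1) = b by omega,
          show a+1+b+1-(a+1) = b+1 by omega]
        have e1 : ((a+1).factorial : ℝ) = (a+1) * a.factorial := by
          rw [Nat.factorial_succ]; push_cast; ring
        have e2 : ((b+1).factorial : ℝ) = (b+1) * b.factorial := by
          rw [Nat.factorial_succ]; push_cast; ring
        rw [e1, e2]
        have : (0:ℝ) < a.factorial := by positivity
        have : (0:ℝ) < b.factorial := by positivity
        field_simp
        push_cast
        ring
    have hGid : G j - G (j+1) = (2*(j:ℝ) - n - 1) / (bP ν (j+1) * bP ν (n+2-j)) := by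
      simp only [hG]
      have hm : n+2-j = (n+1-j)+1 := by omega
      have hm2 : n+2-(j+1) = n+1-j := by omega
      set m := n + 1 - j with hmdef
      have hc2 : (m:ℝ) = (n:ℝ) + 1 - j := by
        rw [hmdef]; push_cast [Nat.cast_sub (show j ≤ n+1 by omega)]; ring
      rw [hm, hm2, bP_succ ν j, bP_succ ν m]
      have p1 := bP_pos ν hν j
      have p2 := bP_pos ν hν m
      have hjj : (0:ℝ) < ν + j + 1 := by positivity
      have hmm : (0:ℝ) < ν + (m:ℝ) + 1 := by positivity
      have key : (2*(j:ℝ) - n - 1) = (ν+(j:ℝ)+1) - (ν+(m:ℝ)+1) := by rw [hc2]; ring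
      rw [key]
      field_simp
    rw [hEid, hGid, div_mul_div_comm]
    apply div_nonneg
    · nlinarith [sq_nonneg (2*(j:ℝ) - n - 1)]
    · have p1 := bP_pos ν hν (j+1)
      have p2 := bP_pos ν hν (n+2-j)
      have : (0:ℝ) < j.factorial := by positivity
      have : (0:ℝ) < (n+1-j).factorial := by positivity
      positivity
  have hsum_nonneg : 0 ≤ ∑ j ∈ range (n+2), E j * (G j - G (j+1)) :=
    Finset.sum_nonneg hterm_nonneg
  linarith [htwice ▸ hsum_nonneg]

lemma turan (ν : ℝ) (hν : 0 ≤ ν) (u : ℝ) (hu : 0 < u) :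
    bS ν u * bS (ν+2) u < bS (ν+1) u * bS (ν+1) u := by
  have h0 := summable_norm_bS ν hν u
  have h1 := summable_norm_bS (ν+1) (by linarith) u
  have h2 := summable_norm_bS (ν+2) (by linarith) u
  rw [bS, bS, bS, tsum_mul_tsum_eq_tsum_sum_range_of_summable_norm h0 h2,
    tsum_mul_tsum_eq_tsum_sum_range_of_summable_norm h1 h1]
  have key : ∀ (μ₁ μ₂ : ℝ) (n : ℕ),
      ∑ k ∈ range (n+1), (bT μ₁ k * u ^ k) * (bT μ₂ (n-k) * u ^ (n-k))
      = (∑ k ∈ range (n+1), bT μ₁ k * bT μ₂ (n-k)) * u ^ n := by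
    intro μ₁ μ₂ n
    rw [Finset.sum_mul]
    apply Finset.sum_congr rfl
    intro k hk
    rw [mem_range] at hk
    rw [show bT μ₁ k * u^k * (bT μ₂ (n-k) * u^(n-k))
        = bT μ₁ k * bT μ₂ (n-k) * (u^k * u^(n-k)) from by ring,
      ← pow_add, show k + (n - k) = n by omega]
  have hle : ∀ n : ℕ, ∑ k ∈ range (n+1), (bT ν k * u ^ k) * (bT (ν+2) (n-k) * u ^ (n-k))
      ≤ ∑ k ∈ range (n+1), (bT (ν+1) k * u ^ k) * (bT (ν+1) (n-k) * u ^ (n-k)) := by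
    intro n
    rw [key, key]
    apply mul_le_mul_of_nonneg_right (coeff_le ν hν n) (by positivity)
  have hlt : ∑ k ∈ range (0+1), (bT ν k * u ^ k) * (bT (ν+2) (0-k) * u ^ (0-k))
      < ∑ k ∈ range (0+1), (bT (ν+1) k * u ^ k) * (bT (ν+1) (0-k) * u ^ (0-k)) := by
    simp only [zero_add, range_one, sum_singleton, Nat.zero_sub, Nat.sub_zero, pow_zero, mul_one]
    have g1 : 0 < Real.Gamma (ν+1) := Real.Gamma_pos_of_pos (by linarith)
    have h1p : (0:ℝ) < ν + 1 := by linarith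
    have h2p : (0:ℝ) < ν + 2 := by linarith
    have hg0 : Real.Gamma (ν+1) ≠ 0 := ne_of_gt g1
    have e0 : bP ν 0 = 1 := by simp [bP]
    have e1 : bP ν 1 = ν + 1 := by simp [bP]
    have e2 : bP ν 2 = (ν+1) * (ν+2) := by
      rw [bP, Finset.prod_range_succ, Finset.prod_range_one]
      push_cast; ring
    have A : bT ν 0 = 1 / Real.Gamma (ν+1) := by
      rw [bT_eq ν hν 0, e0]; norm_num
    have B : bT (ν+1) 0 = 1 / (Real.Gamma (ν+1) * (ν+1)) := by
      rw [bT1_eq ν hν 0, e1]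
      simp only [Nat.factorial_zero, Nat.cast_one, one_mul]
      rw [div_mul_div_comm]; norm_num
    have C : bT (ν+2) 0 = 1 / (Real.Gamma (ν+1) * ((ν+1)*(ν+2))) := by
      rw [bT2_eq ν hν 0, e2]
      simp only [Nat.factorial_zero, Nat.cast_one, one_mul]
      rw [div_mul_div_comm]; norm_num
    rw [A, B, C, div_mul_div_comm, div_mul_div_comm, one_mul]
    apply div_lt_div_of_pos_left one_pos (by positivity)
    nlinarith [mul_pos (mul_pos g1 g1) h1p]
  exact Summable.tsum_lt_tsum hle hlt
    (summable_norm_sum_mul_range_of_summable_norm h0 h2).of_norm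
    (summable_norm_sum_mul_range_of_summable_norm h1 h1).of_norm

/-- Modified Bessel function of the first kind of order ν. -/
noncomputable def besselI (ν : ℝ) (x : ℝ) : ℝ :=
  ∑' k : ℕ, (x / 2) ^ (ν + 2 * (k : ℝ)) / ((Nat.factorial k : ℝ) * Real.Gamma (ν + (k : ℝ) + 1))

lemma besselI_eq (μ : ℝ) (x : ℝ) (hx : 0 < x) :
    besselI μ x = (x/2) ^ μ * bS μ ((x/2)^2) := by
  have hx2 : 0 < x/2 := by linarith
  rw [besselI, bS, ← tsum_mul_left]
  apply tsum_congr
  intro k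
  have : (x/2) ^ (μ + 2 * (k:ℝ)) = (x/2) ^ μ * ((x/2)^2) ^ k := by
    rw [Real.rpow_add hx2]
    congr 1
    rw [show (2 * (k:ℝ)) = ((2 * k : ℕ) : ℝ) by push_cast; ring, Real.rpow_natCast, pow_mul]
  rw [this, bT]
  ring
lemma besselI_pos (μ : ℝ) (hμ : 0 ≤ μ) (x : ℝ) (hx : 0 < x) : 0 < besselI μ x := by
  rw [besselI_eq μ x hx]
  have h1 : 0 < (x/2) ^ μ := Real.rpow_pos_of_pos (by linarith) μ
  have h2 : 0 < bS μ ((x/2)^2) := bS_pos μ hμ _ (by positivity)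
  positivity

lemma hasDerivAt_besselI (μ : ℝ) (hμ : 0 ≤ μ) (x : ℝ) (hx : 0 < x) :
    HasDerivAt (besselI μ) (μ / x * besselI μ x + besselI (μ+1) x) x := by
  have hx2 : 0 < x/2 := by linarith
  have h1 : HasDerivAt (fun y : ℝ => y/2) (1/2) x := (hasDerivAt_id x).div_const 2
  have h3 : HasDerivAt (fun y : ℝ => (y/2) ^ μ) (μ * (x/2) ^ (μ-1) * (1/2)) x :=
    HasDerivAt.comp (h₂ := fun y : ℝ => y ^ μ) x (Real.hasDerivAt_rpow_const (Or.inl (ne_of_gt hx2))) h1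
  have h5 : HasDerivAt (fun y : ℝ => (y/2)^2) ((2:ℕ) * (x/2) ^ 1 * (1/2)) x :=
    HasDerivAt.comp (h₂ := fun y : ℝ => y ^ 2) x (hasDerivAt_pow 2 (x/2)) h1
  have h7 : HasDerivAt (fun y : ℝ => bS μ ((y/2)^2))
      (bS (μ+1) ((x/2)^2) * ((2:ℕ) * (x/2) ^ 1 * (1/2))) x :=
    HasDerivAt.comp (h₂ := bS μ) x (hasDerivAt_bS μ hμ ((x/2)^2)) h5
  have h8 := h3.mul h7
  have heq : besselI μ =ᶠ[nhds x] (fun y => (y/2) ^ μ * bS μ ((y/2)^2)) := by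
    filter_upwards [IsOpen.mem_nhds isOpen_Ioi (Set.mem_Ioi.mpr hx)] with y hy
    exact besselI_eq μ y hy
  apply HasDerivAt.congr_of_eventuallyEq _ heq
  refine h8.congr_deriv ?_
  symm
  rw [besselI_eq μ x hx, besselI_eq (μ+1) x hx]
  have hr1 : (x/2) ^ (μ-1) = (x/2) ^ μ / (x/2) := by
    rw [Real.rpow_sub hx2, Real.rpow_one]
  have hr2 : (x/2) ^ (μ+1) = (x/2) ^ μ * (x/2) := by
    rw [Real.rpow_add hx2, Real.rpow_one]
  rw [hr1, hr2]
  have hne : x ≠ 0 := ne_of_gt hx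
  field_simp
  ring

lemma turan_besselI (ν : ℝ) (hν : 0 ≤ ν) (x : ℝ) (hx : 0 < x) :
    besselI ν x * besselI (ν+2) x < besselI (ν+1) x * besselI (ν+1) x := by
  have hx2 : 0 < x/2 := by linarith
  have hu : 0 < ((x/2)^2 : ℝ) := by positivity
  rw [besselI_eq ν x hx, besselI_eq (ν+1) x hx, besselI_eq (ν+2) x hx]
  have hadd1 : (x/2) ^ (ν+(ν+2) : ℝ) = (x/2)^ν * (x/2)^(ν+2 : ℝ) := Real.rpow_add hx2 _ _
  have hadd2 : (x/2) ^ (ν+(ν+2) : ℝ) = (x/2)^(ν+1 : ℝ) * (x/2)^(ν+1 : ℝ) := by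
    rw [show ν+(ν+2) = (ν+1)+(ν+1) by ring]; exact Real.rpow_add hx2 _ _
  have hE : (0:ℝ) < (x/2) ^ (ν+(ν+2) : ℝ) := Real.rpow_pos_of_pos hx2 _
  calc (x/2)^ν * bS ν ((x/2)^2) * ((x/2)^(ν+2:ℝ) * bS (ν+2) ((x/2)^2))
      = ((x/2)^ν * (x/2)^(ν+2:ℝ)) * (bS ν ((x/2)^2) * bS (ν+2) ((x/2)^2)) := by ring
    _ = (x/2)^(ν+(ν+2):ℝ) * (bS ν ((x/2)^2) * bS (ν+2) ((x/2)^2)) := by rw [hadd1]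
    _ < (x/2)^(ν+(ν+2):ℝ) * (bS (ν+1) ((x/2)^2) * bS (ν+1) ((x/2)^2)) :=
        mul_lt_mul_of_pos_left (turan ν hν _ hu) hE
    _ = ((x/2)^(ν+1:ℝ) * (x/2)^(ν+1:ℝ)) * (bS (ν+1) ((x/2)^2) * bS (ν+1) ((x/2)^2)) := by
        rw [hadd2]
    _ = (x/2)^(ν+1:ℝ) * bS (ν+1) ((x/2)^2) * ((x/2)^(ν+1:ℝ) * bS (ν+1) ((x/2)^2)) := by ring

theorem F_strictMono (ν α r : ℝ) (hν : 0 ≤ ν) (hα : 1 ≤ α) (hr : 0 < r) :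
    StrictMonoOn (fun η : ℝ => η ^ α * deriv (besselI ν) (η⁻¹ * r) / besselI ν (η⁻¹ * r))
      (Set.Ioi 0) := by
  set F : ℝ → ℝ := fun η : ℝ => η ^ α * deriv (besselI ν) (η⁻¹ * r) / besselI ν (η⁻¹ * r)
    with hF
  -- clean derivative formula
  set G : ℝ → ℝ := fun η : ℝ =>
      η ^ α * ((ν/r) * η * besselI ν (η⁻¹ * r) + besselI (ν+1) (η⁻¹ * r))
        / besselI ν (η⁻¹ * r) with hG
  have hFG : ∀ η : ℝ, 0 < η → F η = G η := by
    intro η hη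
    have hx : 0 < η⁻¹ * r := by positivity
    have hder := (hasDerivAt_besselI ν hν (η⁻¹ * r) hx).deriv
    simp only [hF, hG, hder]
    have hrepl : ν / (η⁻¹ * r) = ν / r * η := by field_simp
    rw [hrepl]
  have key : ∀ η ∈ Set.Ioi (0:ℝ), HasDerivAt F
      ((ν/r) * (α+1) * η ^ α
        + (η ^ α / η) * ((α-1) * (besselI (ν+1) (η⁻¹*r) * besselI ν (η⁻¹*r))
          + (η⁻¹*r) * (besselI (ν+1) (η⁻¹*r) * besselI (ν+1) (η⁻¹*r)
              - besselI (ν+2) (η⁻¹*r) * besselI ν (η⁻¹*r)))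
          / (besselI ν (η⁻¹*r))^2) η := by
    intro η hη
    rw [Set.mem_Ioi] at hη
    have hη0 : η ≠ 0 := ne_of_gt hη
    have hx : 0 < η⁻¹ * r := by positivity
    set x := η⁻¹ * r with hxdef
    set D := besselI ν x with hD
    set M := besselI (ν+1) x with hM
    set Q := besselI (ν+2) x with hQ
    have hDpos : 0 < D := besselI_pos ν hν x hx
    have hMpos : 0 < M := besselI_pos (ν+1) (by linarith) x hx
    have hQpos : 0 < Q := besselI_pos (ν+2) (by linarith) x hx
    have hinner : HasDerivAt (fun y : ℝ => y⁻¹ * r) (-(η^2)⁻¹ * r) η :=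
      (hasDerivAt_inv hη0).mul_const r
    have hb1 : HasDerivAt (besselI ν) (ν / x * D + M) ((fun y : ℝ => y⁻¹ * r) η) :=
      hasDerivAt_besselI ν hν x hx
    have hDer : HasDerivAt (fun y : ℝ => besselI ν (y⁻¹ * r))
        ((ν / x * D + M) * (-(η^2)⁻¹ * r)) η := by
      have h := HasDerivAt.comp (h₂ := besselI ν) (h := fun y : ℝ => y⁻¹ * r)
        (x := η) hb1 hinner
      simpa [Function.comp_def] using h
    have hb2 : HasDerivAt (besselI (ν+1)) ((ν+1) / x * M + Q) ((fun y : ℝ => y⁻¹ * r) η) := by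
      have h := hasDerivAt_besselI (ν+1) (by linarith) x hx
      rw [show (ν+1)+1 = ν+2 by ring] at h
      exact h
    have hMer : HasDerivAt (fun y : ℝ => besselI (ν+1) (y⁻¹ * r))
        (((ν+1) / x * M + Q) * (-(η^2)⁻¹ * r)) η := by
      have h := HasDerivAt.comp (h₂ := besselI (ν+1)) (h := fun y : ℝ => y⁻¹ * r)
        (x := η) hb2 hinner
      simpa [Function.comp_def] using h
    have hrpow : HasDerivAt (fun y : ℝ => y ^ α) (α * η ^ (α-1)) η :=
      Real.hasDerivAt_rpow_const (Or.inl hη0)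
    have hlin : HasDerivAt (fun y : ℝ => (ν/r) * y) (ν/r) η := by
      simpa using (hasDerivAt_id η).const_mul (ν/r)
    have hnum1 : HasDerivAt
        (fun y : ℝ => (ν/r) * y * besselI ν (y⁻¹ * r) + besselI (ν+1) (y⁻¹ * r))
        ((ν/r) * D + (ν/r) * η * ((ν / x * D + M) * (-(η^2)⁻¹ * r))
          + ((ν+1) / x * M + Q) * (-(η^2)⁻¹ * r)) η := by
      have h := (hlin.mul hDer).add hMer
      refine h.congr_deriv ?_
      ring
    have hnum : HasDerivAt
        (fun y : ℝ => y ^ α * ((ν/r) * y * besselI ν (y⁻¹ * r) + besselI (ν+1) (y⁻¹ * r)))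
        (α * η ^ (α-1) * ((ν/r) * η * D + M)
          + η ^ α * ((ν/r) * D + (ν/r) * η * ((ν / x * D + M) * (-(η^2)⁻¹ * r))
          + ((ν+1) / x * M + Q) * (-(η^2)⁻¹ * r))) η := by
      have h := hrpow.mul hnum1
      exact h
    have hGder := hnum.div hDer (ne_of_gt hDpos)
    have hFloc : F =ᶠ[nhds η] G := by
      filter_upwards [IsOpen.mem_nhds isOpen_Ioi (Set.mem_Ioi.mpr hη)] with y hy
      exact hFG y hy
    rw [Filter.EventuallyEq.hasDerivAt_iff hFloc]
    have hGform : HasDerivAt G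
        (((α * η ^ (α-1) * ((ν/r) * η * D + M)
          + η ^ α * ((ν/r) * D + (ν/r) * η * ((ν / x * D + M) * (-(η^2)⁻¹ * r))
            + ((ν+1) / x * M + Q) * (-(η^2)⁻¹ * r))) * D
          - (η ^ α * ((ν/r) * η * D + M)) * ((ν / x * D + M) * (-(η^2)⁻¹ * r)))
          / D^2) η := by
      rw [hG]
      exact hGder
    refine hGform.congr_deriv ?_
    symm
    have hpow1 : η ^ (α-1) = η ^ α / η := by
      rw [Real.rpow_sub hη, Real.rpow_one]
    rw [hpow1, hxdef]
    have hDne : D ≠ 0 := ne_of_gt hDpos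
    field_simp
    ring
  have hpos : ∀ η ∈ Set.Ioi (0:ℝ),
      0 < (ν/r) * (α+1) * η ^ α
        + (η ^ α / η) * ((α-1) * (besselI (ν+1) (η⁻¹*r) * besselI ν (η⁻¹*r))
          + (η⁻¹*r) * (besselI (ν+1) (η⁻¹*r) * besselI (ν+1) (η⁻¹*r)
              - besselI (ν+2) (η⁻¹*r) * besselI ν (η⁻¹*r)))
          / (besselI ν (η⁻¹*r))^2 := by
    intro η hη
    rw [Set.mem_Ioi] at hη
    have hx : 0 < η⁻¹ * r := by positivity
    have hDpos := besselI_pos ν hν _ hx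
    have hMpos := besselI_pos (ν+1) (by linarith) _ hx
    have hApos : 0 < η ^ α := Real.rpow_pos_of_pos hη α
    have ht := turan_besselI ν hν _ hx
    have t1 : 0 ≤ (ν/r) * (α+1) * η ^ α := by positivity
    have t2 : 0 ≤ (α-1) * (besselI (ν+1) (η⁻¹*r) * besselI ν (η⁻¹*r)) := by
      have : 0 ≤ α - 1 := by linarith
      positivity
    have t3 : 0 < (η⁻¹*r) * (besselI (ν+1) (η⁻¹*r) * besselI (ν+1) (η⁻¹*r)
        - besselI (ν+2) (η⁻¹*r) * besselI ν (η⁻¹*r)) := by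
      apply mul_pos hx
      rw [sub_pos]
      linarith [ht]
    have t4 : 0 < (η ^ α / η) * ((α-1) * (besselI (ν+1) (η⁻¹*r) * besselI ν (η⁻¹*r))
          + (η⁻¹*r) * (besselI (ν+1) (η⁻¹*r) * besselI (ν+1) (η⁻¹*r)
              - besselI (ν+2) (η⁻¹*r) * besselI ν (η⁻¹*r)))
          / (besselI ν (η⁻¹*r))^2 := by
      apply div_pos (mul_pos (by positivity) (by linarith)) (by positivity)
    linarith
  apply strictMonoOn_of_deriv_pos (convex_Ioi 0)
  · intro η hη
    exact (key η hη).differentiableAt.continuousAt.continuousWithinAt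
  · intro η hη
    rw [interior_Ioi] at hη
    rw [(key η hη).deriv]
    exact hpos η hη
end

section
/- Fix ν ≥ 0 and r₁ ∈ (0,1). Define ρ(σ) = (σ I_ν'(r₁/√σ) I_ν(r₁) − I_ν(r₁/√σ) I_ν'(r₁)) / (σ I_ν'(r₁/√σ) K_ν(r₁) − I_ν(r₁/√σ) K_ν'(r₁)). If σ₁, σ₂ > 0 with ρ(σ₁) = ρ(σ₂) (and both denominators nonzero), then σ₁ = σ₂. -/
open Real Set Filter Topology MeasureTheory Function

/-- Modified Bessel function of the second kind of order ν. -/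
noncomputable def besselK (ν : ℝ) (x : ℝ) : ℝ :=
  ∫ t in Set.Ioi (0 : ℝ), Real.exp (-x * Real.cosh t) * Real.cosh (ν * t)

namespace BesselAux


lemma gamma_pos (ν : ℝ) (hν : 0 ≤ ν) (k : ℕ) : 0 < Real.Gamma (ν + (k:ℝ) + 1) :=
  Real.Gamma_pos_of_pos (by positivity)

lemma denom_pos (ν : ℝ) (hν : 0 ≤ ν) (k : ℕ) :
    0 < (Nat.factorial k : ℝ) * Real.Gamma (ν + (k:ℝ) + 1) :=
  mul_pos (by exact_mod_cast Nat.factorial_pos k) (gamma_pos ν hν k)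

lemma factorial_mul_le_gamma (ν : ℝ) (hν : 0 ≤ ν) (k : ℕ) :
    (Nat.factorial k : ℝ) * Real.Gamma (ν + 1) ≤ Real.Gamma (ν + (k:ℝ) + 1) := by
  induction k with
  | zero => simp
  | succ k ih =>
    have hne : ν + (k:ℝ) + 1 ≠ 0 := by positivity
    have h1 : Real.Gamma (ν + ((k:ℕ)+1:ℕ) + 1) = (ν + (k:ℝ) + 1) * Real.Gamma (ν + (k:ℝ) + 1) := by
      rw [show (ν + (((k:ℕ)+1:ℕ)):ℝ) + 1 = (ν + (k:ℝ) + 1) + 1 by push_cast; ring]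
      exact Real.Gamma_add_one hne
    rw [h1]
    have h2 : ((k:ℝ) + 1) * ((Nat.factorial k : ℝ) * Real.Gamma (ν + 1))
        ≤ (ν + (k:ℝ) + 1) * Real.Gamma (ν + (k:ℝ) + 1) := by
      apply mul_le_mul (by linarith) ih (by positivity) (by positivity)
    calc (Nat.factorial (k+1) : ℝ) * Real.Gamma (ν + 1)
        = ((k:ℝ)+1) * ((Nat.factorial k : ℝ) * Real.Gamma (ν + 1)) := by
          rw [Nat.factorial_succ]; push_cast; ring
      _ ≤ _ := h2

lemma add_le_mul_two_pow (C : ℝ) (hC : 0 ≤ C) (k : ℕ) : (k:ℝ) + C ≤ (1+C) * 2^k := by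
  have h2 : (k:ℝ) + 1 ≤ 2^k := by
    exact_mod_cast Nat.succ_le_of_lt (Nat.lt_two_pow_self (n := k))
  nlinarith [pow_nonneg (by norm_num : (0:ℝ) ≤ 2) k]

/-- Master summability lemma for Bessel-type series. -/
lemma summable_master (ν a C M : ℝ) (hν : 0 ≤ ν) (hC : 1 ≤ C) (hM : 0 ≤ M)
    {z : ℝ} (hz : 0 < z) (f : ℕ → ℝ)
    (hf : ∀ k : ℕ, |f k| ≤ M * ((k:ℝ)+C)^2 * z ^ (ν + 2*(k:ℝ) + a) /
      ((Nat.factorial k : ℝ) * Real.Gamma (ν + (k:ℝ) + 1))) :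
    Summable f := by
  have hC0 : (0:ℝ) ≤ C := by linarith
  set K : ℝ := M * (1+C)^2 * z ^ (ν + a) / Real.Gamma (ν + 1) with hK
  have hgsum : Summable (fun k : ℕ => K * ((4*z^2) ^ k / (Nat.factorial k : ℝ))) :=
    (Real.summable_pow_div_factorial (4*z^2)).mul_left K
  apply Summable.of_norm_bounded hgsum
  intro k
  rw [Real.norm_eq_abs]
  refine le_trans (hf k) ?_
  have hzp : z ^ (ν + 2*(k:ℝ) + a) = z ^ (ν + a) * (z^2)^k := by
    rw [show ν + 2*(k:ℝ) + a = (ν + a) + (2*k:ℕ) by push_cast; ring,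
      Real.rpow_add hz, Real.rpow_natCast, pow_mul]
  have hsq : ((k:ℝ)+C)^2 ≤ (1+C)^2 * 4^k := by
    have h1 := add_le_mul_two_pow C hC0 k
    have h2 : ((1+C) * 2^k)^2 = (1+C)^2 * 4^k := by
      rw [mul_pow, ← pow_mul, show k*2 = 2*k from mul_comm k 2, pow_mul]; norm_num
    nlinarith [pow_nonneg (by norm_num : (0:ℝ) ≤ 2) k]
  have hgam := factorial_mul_le_gamma ν hν k
  have hgam1 : 0 < Real.Gamma (ν + 1) := Real.Gamma_pos_of_pos (by linarith)
  have hfac : (1:ℝ) ≤ (Nat.factorial k : ℝ) := by exact_mod_cast Nat.one_le_iff_ne_zero.mpr (Nat.factorial_ne_zero k)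
  have hden := denom_pos ν hν k
  have hinv : ((Nat.factorial k : ℝ) * Real.Gamma (ν + (k:ℝ) + 1))⁻¹
      ≤ ((Nat.factorial k : ℝ) * ((Nat.factorial k : ℝ) * Real.Gamma (ν + 1)))⁻¹ := by
    apply inv_anti₀ (by positivity)
    exact mul_le_mul_of_nonneg_left hgam (by positivity)
  have hz2 : (0:ℝ) < z ^ (ν + a) := Real.rpow_pos_of_pos hz _
  have hzk : (0:ℝ) ≤ (z^2)^k := by positivity
  calc M * ((k:ℝ)+C)^2 * z ^ (ν + 2*(k:ℝ) + a) /
        ((Nat.factorial k : ℝ) * Real.Gamma (ν + (k:ℝ) + 1))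
      = M * ((k:ℝ)+C)^2 * (z ^ (ν + a) * (z^2)^k) *
        ((Nat.factorial k : ℝ) * Real.Gamma (ν + (k:ℝ) + 1))⁻¹ := by
        rw [hzp]; ring
    _ ≤ M * ((1+C)^2 * 4^k) * (z ^ (ν + a) * (z^2)^k) *
        ((Nat.factorial k : ℝ) * ((Nat.factorial k : ℝ) * Real.Gamma (ν + 1)))⁻¹ := by
        apply mul_le_mul
        · apply mul_le_mul_of_nonneg_right
          · exact mul_le_mul_of_nonneg_left hsq hM
          · positivity
        · exact hinv
        · positivity
        · positivity
    _ ≤ K * ((4*z^2) ^ k / (Nat.factorial k : ℝ)) := by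
        rw [hK]
        rw [mul_pow]
        have h1 : ((Nat.factorial k : ℝ) * ((Nat.factorial k : ℝ) * Real.Gamma (ν + 1)))⁻¹
            ≤ ((Nat.factorial k : ℝ) * Real.Gamma (ν + 1))⁻¹ := by
          apply inv_anti₀ (by positivity)
          calc (Nat.factorial k : ℝ) * Real.Gamma (ν + 1)
              = 1 * ((Nat.factorial k : ℝ) * Real.Gamma (ν + 1)) := (one_mul _).symm
            _ ≤ (Nat.factorial k : ℝ) * ((Nat.factorial k : ℝ) * Real.Gamma (ν + 1)) :=
              mul_le_mul_of_nonneg_right hfac (by positivity)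
        calc M * ((1+C)^2 * 4^k) * (z ^ (ν + a) * (z^2)^k) *
              ((Nat.factorial k : ℝ) * ((Nat.factorial k : ℝ) * Real.Gamma (ν + 1)))⁻¹
            ≤ M * ((1+C)^2 * 4^k) * (z ^ (ν + a) * (z^2)^k) *
              ((Nat.factorial k : ℝ) * Real.Gamma (ν + 1))⁻¹ := by
              apply mul_le_mul_of_nonneg_left h1 (by positivity)
          _ = M * (1+C)^2 * z ^ (ν + a) / Real.Gamma (ν + 1) *
              (4^k * (z^2)^k / (Nat.factorial k : ℝ)) := by
              field_simp



noncomputable def bI' (ν x : ℝ) : ℝ :=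
  ∑' k : ℕ, (ν + 2 * (k:ℝ)) * (x / 2) ^ (ν + 2 * (k : ℝ) - 1) / 2 /
    ((Nat.factorial k : ℝ) * Real.Gamma (ν + (k : ℝ) + 1))

noncomputable def bI'' (ν x : ℝ) : ℝ :=
  ∑' k : ℕ, (ν + 2 * (k:ℝ)) * (ν + 2 * (k:ℝ) - 1) * (x / 2) ^ (ν + 2 * (k : ℝ) - 2) / 4 /
    ((Nat.factorial k : ℝ) * Real.Gamma (ν + (k : ℝ) + 1))

section axioms_for_now
variable (ν x : ℝ)
lemma gamma_pos' (hν : 0 ≤ ν) (k : ℕ) : 0 < Real.Gamma (ν + (k:ℝ) + 1) :=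
  Real.Gamma_pos_of_pos (by positivity)
lemma denom_pos' (hν : 0 ≤ ν) (k : ℕ) :
    0 < (Nat.factorial k : ℝ) * Real.Gamma (ν + (k:ℝ) + 1) :=
  mul_pos (by exact_mod_cast Nat.factorial_pos k) (gamma_pos' ν hν k)
end axioms_for_now


variable {ν x : ℝ}

lemma summable_bTerm (hν : 0 ≤ ν) (hx : 0 < x) :
    Summable (fun k : ℕ => (x / 2) ^ (ν + 2 * (k : ℝ)) /
      ((Nat.factorial k : ℝ) * Real.Gamma (ν + (k : ℝ) + 1))) := by
  apply summable_master ν 0 1 1 hν le_rfl zero_le_one (by positivity : (0:ℝ) < x/2)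
  intro k
  rw [add_zero, abs_of_nonneg (by positivity)]
  have h1 : (1:ℝ) ≤ ((k:ℝ)+1)^2 := by nlinarith [Nat.cast_nonneg (α := ℝ) k]
  have h2 : (0:ℝ) < (x/2) ^ (ν + 2*(k:ℝ)) := Real.rpow_pos_of_pos (by positivity) _
  have h3 := denom_pos' ν hν k
  rw [one_mul]
  apply div_le_div_of_nonneg_right ?_ h3.le  -- might be wrong name
  nlinarith

lemma summable_bI' (hν : 0 ≤ ν) (hx : 0 < x) :
    Summable (fun k : ℕ => (ν + 2 * (k:ℝ)) * (x / 2) ^ (ν + 2 * (k : ℝ) - 1) / 2 /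
      ((Nat.factorial k : ℝ) * Real.Gamma (ν + (k : ℝ) + 1))) := by
  apply summable_master ν (-1) (ν+2) 1 hν (by linarith) zero_le_one
    (by positivity : (0:ℝ) < x/2)
  intro k
  have h3 := denom_pos' ν hν k
  have h2 : (0:ℝ) < (x/2) ^ (ν + 2*(k:ℝ) - 1) := Real.rpow_pos_of_pos (by positivity) _
  rw [abs_of_nonneg (by positivity)]
  rw [show ν + 2*(k:ℝ) + -1 = ν + 2*(k:ℝ) - 1 by ring, one_mul]
  have hk : (0:ℝ) ≤ (k:ℝ) := Nat.cast_nonneg k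
  apply div_le_div_of_nonneg_right ?_ h3.le
  nlinarith [mul_le_mul_of_nonneg_right
    (show (ν + 2*(k:ℝ))/2 ≤ ((k:ℝ)+(ν+2))^2 by nlinarith) h2.le]

lemma summable_bI'' (hν : 0 ≤ ν) (hx : 0 < x) :
    Summable (fun k : ℕ => (ν + 2 * (k:ℝ)) * (ν + 2 * (k:ℝ) - 1) * (x / 2) ^ (ν + 2 * (k : ℝ) - 2) / 4 /
      ((Nat.factorial k : ℝ) * Real.Gamma (ν + (k : ℝ) + 1))) := by
  apply summable_master ν (-2) (ν+2) 1 hν (by linarith) zero_le_one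
    (by positivity : (0:ℝ) < x/2)
  intro k
  have h3 := denom_pos' ν hν k
  have h2 : (0:ℝ) < (x/2) ^ (ν + 2*(k:ℝ) - 2) := Real.rpow_pos_of_pos (by positivity) _
  rw [show ν + 2*(k:ℝ) + -2 = ν + 2*(k:ℝ) - 2 by ring, one_mul]
  have hk : (0:ℝ) ≤ (k:ℝ) := Nat.cast_nonneg k
  have habs : |(ν + 2 * (k:ℝ)) * (ν + 2 * (k:ℝ) - 1) * (x / 2) ^ (ν + 2 * (k : ℝ) - 2) / 4 /
      ((Nat.factorial k : ℝ) * Real.Gamma (ν + (k : ℝ) + 1))|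
      ≤ (ν + 2 * (k:ℝ)) * (ν + 2 * (k:ℝ) + 1) * (x / 2) ^ (ν + 2 * (k : ℝ) - 2) / 4 /
      ((Nat.factorial k : ℝ) * Real.Gamma (ν + (k : ℝ) + 1)) := by
    rw [abs_div, abs_div, abs_of_pos h3, abs_of_nonneg (by norm_num : (0:ℝ) ≤ 4)]
    apply div_le_div_of_nonneg_right ?_ h3.le
    apply div_le_div_of_nonneg_right ?_ (by norm_num : (0:ℝ) ≤ 4)
    rw [abs_mul, abs_mul, abs_of_nonneg (by positivity : (0:ℝ) ≤ ν + 2*(k:ℝ)),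
      abs_of_pos h2]
    apply mul_le_mul_of_nonneg_right ?_ (le_of_lt h2)
    apply mul_le_mul_of_nonneg_left ?_ (by positivity)
    cases abs_cases (ν + 2*(k:ℝ) - 1) with
    | inl h => rw [h.1]; linarith
    | inr h => rw [h.1]; linarith
  refine le_trans habs ?_
  apply div_le_div_of_nonneg_right ?_ h3.le
  nlinarith [mul_le_mul_of_nonneg_right
    (show (ν + 2*(k:ℝ)) * (ν + 2*(k:ℝ) + 1)/4 ≤ ((k:ℝ)+(ν+2))^2 by nlinarith) h2.le]


lemma hasDerivAt_besselI (hν : 0 ≤ ν) (hx : 0 < x) :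
    HasDerivAt (besselI ν) (bI' ν x) x := by
  have hxt : x ∈ Ioo (x/2) (2*x) := ⟨by linarith, by linarith⟩
  have main := hasDerivAt_tsum_of_isPreconnected
    (u := fun k : ℕ => (2/x) * ((k:ℝ)+(ν+2))^2 * x ^ (ν + 2*(k:ℝ)) /
      ((Nat.factorial k:ℝ) * Real.Gamma (ν+(k:ℝ)+1)))
    (g := fun (k : ℕ) (y : ℝ) => (y / 2) ^ (ν + 2 * (k:ℝ)) /
      ((Nat.factorial k : ℝ) * Real.Gamma (ν + (k:ℝ) + 1)))
    (g' := fun (k : ℕ) (y : ℝ) => (ν + 2*(k:ℝ)) * (y / 2) ^ (ν + 2 * (k:ℝ) - 1) / 2 /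
      ((Nat.factorial k : ℝ) * Real.Gamma (ν + (k:ℝ) + 1)))
    (y₀ := x) (y := x) (t := Ioo (x/2) (2*x))
    ?_ isOpen_Ioo isPreconnected_Ioo ?_ ?_ hxt ?_ hxt
  · exact main
  · -- Summable u
    apply summable_master ν 0 (ν+2) (2/x) hν (by linarith) (by positivity) hx
    intro k
    rw [add_zero, abs_of_nonneg (by positivity)]
  · -- HasDerivAt of each term
    intro k y hy
    have hy2 : 0 < y / 2 := by have := hy.1; have : x/2 < y := this; linarith [hx]
    have h1 : HasDerivAt (fun y : ℝ => y / 2) (1/2) y := (hasDerivAt_id y).div_const 2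
    have h2 : HasDerivAt (fun z : ℝ => z ^ (ν + 2*(k:ℝ)))
        ((ν + 2*(k:ℝ)) * (y/2) ^ (ν + 2*(k:ℝ) - 1)) (y/2) :=
      Real.hasDerivAt_rpow_const (Or.inl (ne_of_gt hy2))
    have h3 := (h2.comp y h1).div_const ((Nat.factorial k : ℝ) * Real.Gamma (ν + (k:ℝ) + 1))
    refine h3.congr_deriv (Eq.symm ?_)
    ring
  · -- bound
    intro k y hy
    have hy1 : x/2 < y := hy.1
    have hy2 : y < 2*x := hy.2
    have hy0 : 0 < y := by linarith
    have hyd : 0 < y/2 := by linarith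
    have hp : 0 ≤ ν + 2*(k:ℝ) := by positivity
    have h3 := denom_pos' ν hν k
    rw [Real.norm_eq_abs, abs_div, abs_of_pos h3, abs_of_nonneg (by positivity)]
    apply div_le_div_of_nonneg_right ?_ h3.le
    have h5 : (y/2) ^ (ν + 2*(k:ℝ) - 1) = (y/2) ^ (ν + 2*(k:ℝ)) * (y/2)⁻¹ := by
      rw [Real.rpow_sub hyd, Real.rpow_one, div_eq_mul_inv]
    have h6 : (y/2) ^ (ν + 2*(k:ℝ)) ≤ x ^ (ν + 2*(k:ℝ)) :=
      Real.rpow_le_rpow hyd.le (by linarith) hp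
    have h7 : (y/2)⁻¹ ≤ 4/x := by
      rw [show (4:ℝ)/x = (x/4)⁻¹ by field_simp]
      exact inv_anti₀ (by linarith) (by linarith)
    have hA : (y/2) ^ (ν + 2*(k:ℝ)) * (y/2)⁻¹ ≤ x ^ (ν + 2*(k:ℝ)) * (4/x) :=
      mul_le_mul h6 h7 (by positivity) (by positivity)
    calc (ν + 2*(k:ℝ)) * (y/2) ^ (ν + 2*(k:ℝ) - 1) / 2
        = ((ν + 2*(k:ℝ))/2) * ((y/2) ^ (ν + 2*(k:ℝ)) * (y/2)⁻¹) := by rw [h5]; ring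
      _ ≤ (((k:ℝ)+(ν+2))^2/2) * (x ^ (ν + 2*(k:ℝ)) * (4/x)) := by
          apply mul_le_mul ?_ hA (by positivity) (by positivity)
          have hk : (0:ℝ) ≤ (k:ℝ) := Nat.cast_nonneg k
          nlinarith
      _ = (2/x) * ((k:ℝ)+(ν+2))^2 * x ^ (ν + 2*(k:ℝ)) := by
          field_simp
          ring
  · exact summable_bTerm hν hx

lemma hasDerivAt_bI' (hν : 0 ≤ ν) (hx : 0 < x) :
    HasDerivAt (bI' ν) (bI'' ν x) x := by
  have hxt : x ∈ Ioo (x/2) (2*x) := ⟨by linarith, by linarith⟩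
  have main := hasDerivAt_tsum_of_isPreconnected
    (u := fun k : ℕ => (16/x^2) * ((k:ℝ)+(ν+2))^2 * x ^ (ν + 2*(k:ℝ)) /
      ((Nat.factorial k:ℝ) * Real.Gamma (ν+(k:ℝ)+1)))
    (g := fun (k : ℕ) (y : ℝ) => (ν + 2*(k:ℝ)) * (y / 2) ^ (ν + 2 * (k:ℝ) - 1) / 2 /
      ((Nat.factorial k : ℝ) * Real.Gamma (ν + (k:ℝ) + 1)))
    (g' := fun (k : ℕ) (y : ℝ) => (ν + 2*(k:ℝ)) * (ν + 2*(k:ℝ) - 1) * (y / 2) ^ (ν + 2 * (k:ℝ) - 2) / 4 /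
      ((Nat.factorial k : ℝ) * Real.Gamma (ν + (k:ℝ) + 1)))
    (y₀ := x) (y := x) (t := Ioo (x/2) (2*x))
    ?_ isOpen_Ioo isPreconnected_Ioo ?_ ?_ hxt ?_ hxt
  · exact main
  · -- Summable u
    apply summable_master ν 0 (ν+2) (16/x^2) hν (by linarith) (by positivity) hx
    intro k
    rw [add_zero, abs_of_nonneg (by positivity)]
  · -- HasDerivAt of each term
    intro k y hy
    have hy2 : 0 < y / 2 := by have h := hy.1; linarith [hx]
    have h1 : HasDerivAt (fun y : ℝ => y / 2) (1/2) y := (hasDerivAt_id y).div_const 2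
    have h2 : HasDerivAt (fun z : ℝ => z ^ (ν + 2*(k:ℝ) - 1))
        ((ν + 2*(k:ℝ) - 1) * (y/2) ^ (ν + 2*(k:ℝ) - 1 - 1)) (y/2) :=
      Real.hasDerivAt_rpow_const (Or.inl (ne_of_gt hy2))
    have h3 := (((h2.comp y h1).const_mul (ν + 2*(k:ℝ))).div_const 2).div_const
      ((Nat.factorial k : ℝ) * Real.Gamma (ν + (k:ℝ) + 1))
    refine h3.congr_deriv (Eq.symm ?_)
    rw [show ν + 2*(k:ℝ) - 1 - 1 = ν + 2*(k:ℝ) - 2 by ring]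
    show (ν + 2*(k:ℝ)) * (ν + 2*(k:ℝ) - 1) * (y / 2) ^ (ν + 2 * (k:ℝ) - 2) / 4 /
      ((Nat.factorial k : ℝ) * Real.Gamma (ν + (k:ℝ) + 1)) = _
    ring
  · -- bound
    intro k y hy
    have hy1 : x/2 < y := hy.1
    have hy2 : y < 2*x := hy.2
    have hy0 : 0 < y := by linarith
    have hyd : 0 < y/2 := by linarith
    have hp : 0 ≤ ν + 2*(k:ℝ) := by positivity
    have hk : (0:ℝ) ≤ (k:ℝ) := Nat.cast_nonneg k
    have h3 := denom_pos' ν hν k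
    have hrp : (0:ℝ) < (y/2) ^ (ν + 2*(k:ℝ) - 2) := Real.rpow_pos_of_pos hyd _
    rw [Real.norm_eq_abs, abs_div, abs_of_pos h3]
    apply div_le_div_of_nonneg_right ?_ h3.le
    have habs : |(ν + 2*(k:ℝ)) * (ν + 2*(k:ℝ) - 1) * (y / 2) ^ (ν + 2 * (k:ℝ) - 2) / 4|
        ≤ (ν + 2*(k:ℝ)) * (ν + 2*(k:ℝ) + 1) * (y / 2) ^ (ν + 2 * (k:ℝ) - 2) / 4 := by
      rw [abs_div, abs_mul, abs_mul, abs_of_nonneg hp, abs_of_pos hrp,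
        abs_of_nonneg (by norm_num : (0:ℝ) ≤ 4)]
      apply div_le_div_of_nonneg_right ?_ (by norm_num : (0:ℝ) ≤ 4)
      apply mul_le_mul_of_nonneg_right ?_ hrp.le
      apply mul_le_mul_of_nonneg_left ?_ hp
      cases abs_cases (ν + 2*(k:ℝ) - 1) with
      | inl h => rw [h.1]; linarith
      | inr h => rw [h.1]; linarith
    refine le_trans habs ?_
    have h5 : (y/2) ^ (ν + 2*(k:ℝ) - 2) = (y/2) ^ (ν + 2*(k:ℝ)) * ((y/2)^(2:ℕ))⁻¹ := by
      rw [Real.rpow_sub hyd, div_eq_mul_inv, ← Real.rpow_natCast (y/2) 2]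
      norm_num
    have h6 : (y/2) ^ (ν + 2*(k:ℝ)) ≤ x ^ (ν + 2*(k:ℝ)) :=
      Real.rpow_le_rpow hyd.le (by linarith) hp
    have h7 : ((y/2)^(2:ℕ))⁻¹ ≤ 16/x^2 := by
      rw [show (16:ℝ)/x^2 = ((x/4)^(2:ℕ))⁻¹ by field_simp; ring]
      apply inv_anti₀ (by positivity)
      apply pow_le_pow_left₀ (by linarith) (by linarith)
    have hA : (y/2) ^ (ν + 2*(k:ℝ)) * ((y/2)^(2:ℕ))⁻¹ ≤ x ^ (ν + 2*(k:ℝ)) * (16/x^2) :=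
      mul_le_mul h6 h7 (by positivity) (by positivity)
    calc (ν + 2*(k:ℝ)) * (ν + 2*(k:ℝ) + 1) * (y/2) ^ (ν + 2*(k:ℝ) - 2) / 4
        = ((ν + 2*(k:ℝ)) * (ν + 2*(k:ℝ) + 1)/4) * ((y/2) ^ (ν + 2*(k:ℝ)) * ((y/2)^(2:ℕ))⁻¹) := by
          rw [h5]; ring
      _ ≤ (((k:ℝ)+(ν+2))^2) * (x ^ (ν + 2*(k:ℝ)) * (16/x^2)) := by
          apply mul_le_mul ?_ hA (by positivity) (by positivity)
          nlinarith
      _ = (16/x^2) * ((k:ℝ)+(ν+2))^2 * x ^ (ν + 2*(k:ℝ)) := by ring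
  · exact summable_bI' hν hx


lemma besselI_pos (hν : 0 ≤ ν) (hx : 0 < x) : 0 < besselI ν x := by
  apply Summable.tsum_pos (summable_bTerm hν hx) ?_ 0
  · have := denom_pos' ν hν 0
    have : (0:ℝ) < (x/2) ^ (ν + 2*((0:ℕ):ℝ)) := Real.rpow_pos_of_pos (by linarith) _
    positivity
  · intro k
    have := denom_pos' ν hν k
    have : (0:ℝ) < (x/2) ^ (ν + 2*((k:ℕ):ℝ)) := Real.rpow_pos_of_pos (by linarith) _
    positivity

lemma bI'_nonneg_terms (hν : 0 ≤ ν) (hx : 0 < x) (k : ℕ) :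
    0 ≤ (ν + 2 * (k:ℝ)) * (x / 2) ^ (ν + 2 * (k : ℝ) - 1) / 2 /
      ((Nat.factorial k : ℝ) * Real.Gamma (ν + (k : ℝ) + 1)) := by
  have h1 := denom_pos' ν hν k
  have h2 : (0:ℝ) < (x/2) ^ (ν + 2*(k:ℝ) - 1) := Real.rpow_pos_of_pos (by linarith) _
  positivity

lemma bI'_pos (hν : 0 ≤ ν) (hx : 0 < x) : 0 < bI' ν x := by
  apply Summable.tsum_pos (summable_bI' hν hx) (bI'_nonneg_terms hν hx) 1
  have h1 := denom_pos' ν hν 1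
  have h2 : (0:ℝ) < (x/2) ^ (ν + 2*((1:ℕ):ℝ) - 1) := Real.rpow_pos_of_pos (by linarith) _
  have h3 : (0:ℝ) < ν + 2*((1:ℕ):ℝ) := by push_cast; linarith
  positivity

lemma bessel_ode (hν : 0 ≤ ν) (hx : 0 < x) :
    bI'' ν x = (1 + ν^2/x^2) * besselI ν x - bI' ν x / x := by
  have hx2 : (0:ℝ) < x/2 := by linarith
  set D : ℕ → ℝ := fun k => (Nat.factorial k : ℝ) * Real.Gamma (ν + (k:ℝ) + 1) with hD
  have hDpos : ∀ k, 0 < D k := fun k => denom_pos' ν hν k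
  set f0 : ℕ → ℝ := fun k => (x / 2) ^ (ν + 2 * (k:ℝ)) / D k with hf0
  set f1 : ℕ → ℝ := fun k => (ν + 2 * (k:ℝ)) * (x / 2) ^ (ν + 2 * (k:ℝ) - 1) / 2 / D k with hf1
  set f2 : ℕ → ℝ := fun k => (ν + 2 * (k:ℝ)) * (ν + 2 * (k:ℝ) - 1) * (x / 2) ^ (ν + 2 * (k:ℝ) - 2) / 4 / D k with hf2
  have hS0 : Summable f0 := summable_bTerm hν hx
  have hS1 : Summable f1 := summable_bI' hν hx
  have hS2 : Summable f2 := summable_bI'' hν hx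
  have hI : besselI ν x = ∑' k, f0 k := rfl
  have hI' : bI' ν x = ∑' k, f1 k := rfl
  have hI'' : bI'' ν x = ∑' k, f2 k := rfl
  -- the two reindexed series
  set g : ℕ → ℝ := fun k => (4*(k:ℝ)*(ν+(k:ℝ))) * f0 k with hg
  have hSg : Summable g := by
    apply summable_master ν 0 (ν+2) 4 hν (by linarith) (by norm_num) hx2
    intro k
    have hDk := hDpos k
    have hp : (0:ℝ) < (x/2)^(ν+2*(k:ℝ)) := Real.rpow_pos_of_pos hx2 _
    have hk : (0:ℝ) ≤ (k:ℝ) := Nat.cast_nonneg k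
    rw [hg, add_zero]
    simp only [hf0]
    rw [abs_of_nonneg (by positivity), mul_div_assoc']
    apply div_le_div_of_nonneg_right ?_ (hDpos k).le
    nlinarith [mul_le_mul_of_nonneg_right
      (show 4*(k:ℝ)*(ν+(k:ℝ)) ≤ 4*((k:ℝ)+(ν+2))^2 by nlinarith) hp.le]
  -- termwise identity: x^2 f2 + x f1 - ν² f0 = g
  have hterm : ∀ k : ℕ, x^2 * f2 k + x * f1 k - ν^2 * f0 k = g k := by
    intro k
    have e1 : (x/2) ^ (ν + 2*(k:ℝ) - 1) = (x/2) ^ (ν + 2*(k:ℝ)) / (x/2) := by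
      rw [Real.rpow_sub hx2, Real.rpow_one]
    have e2 : (x/2) ^ (ν + 2*(k:ℝ) - 2) = (x/2) ^ (ν + 2*(k:ℝ)) / (x/2)^(2:ℕ) := by
      rw [Real.rpow_sub hx2, ← Real.rpow_natCast (x/2) 2]
      norm_num
    rw [hg]
    simp only [hf2, hf1, hf0]
    rw [e1, e2]
    have hDk := (hDpos k).ne'
    field_simp
    ring
  -- g reindexes to shifted h
  have hreix : ∀ k : ℕ, g (k+1) = 4*(x/2)^(2:ℝ) * f0 k := by
    intro k
    have hgam : Real.Gamma (ν + ((k:ℕ)+1:ℕ) + 1) = (ν + (k:ℝ) + 1) * Real.Gamma (ν + (k:ℝ) + 1) := by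
      rw [show (ν + (((k:ℕ)+1:ℕ)):ℝ) + 1 = (ν + (k:ℝ) + 1) + 1 by push_cast; ring]
      exact Real.Gamma_add_one (by positivity)
    have hfac : (Nat.factorial (k+1) : ℝ) = ((k:ℝ)+1) * (Nat.factorial k : ℝ) := by
      rw [Nat.factorial_succ]; push_cast; ring
    have hpow : (x/2) ^ (ν + 2*((k:ℝ)+1)) = (x/2) ^ (ν + 2*(k:ℝ)) * (x/2)^(2:ℝ) := by
      rw [← Real.rpow_add hx2]
      congr 1
      ring
    rw [hg, hf0]
    simp only
    rw [hD]
    simp only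
    rw [hfac, hgam]
    push_cast
    rw [hpow]

    have h1 : (0:ℝ) < (k:ℝ) + 1 := by positivity
    have h2 : (0:ℝ) < ν + (k:ℝ) + 1 := by positivity
    have h3 := (hDpos k).ne'
    rw [hD] at h3
    field_simp
    ring
  have hgzero : g 0 = 0 := by rw [hg]; simp
  have hkey : ∑' k, g k = x^2 * ∑' k, f0 k := by
    rw [Summable.tsum_eq_zero_add hSg, hgzero, zero_add]
    rw [tsum_congr hreix]
    rw [Summable.tsum_mul_left _ hS0]
    congr 1
    rw [show (x/2:ℝ)^(2:ℝ) = (x/2)^(2:ℕ) by rw [← Real.rpow_natCast (x/2) 2]; norm_num]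
    field_simp
    ring
  -- combine
  have hcomb : ∑' k, (x^2 * f2 k + x * f1 k - ν^2 * f0 k)
      = x^2 * (∑' k, f2 k) + x * (∑' k, f1 k) - ν^2 * (∑' k, f0 k) := by
    rw [Summable.tsum_sub ((hS2.mul_left _).add (hS1.mul_left _)) (hS0.mul_left _),
      Summable.tsum_add (hS2.mul_left _) (hS1.mul_left _),
      Summable.tsum_mul_left _ hS2, Summable.tsum_mul_left _ hS1, Summable.tsum_mul_left _ hS0]
  have hfin : x^2 * (∑' k, f2 k) + x * (∑' k, f1 k) - ν^2 * (∑' k, f0 k) = x^2 * (∑' k, f0 k) := by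
    rw [← hcomb, tsum_congr hterm, hkey]
  rw [hI'', hI, hI']
  have hxne : x ≠ 0 := hx.ne'
  have hx2' : x^2 ≠ 0 := by positivity
  rw [show ∑' k, f2 k = (x^2 * ∑' k, f0 k - x * ∑' k, f1 k + ν^2 * ∑' k, f0 k) / x^2 by
    rw [eq_div_iff hx2']; linear_combination hfin]
  field_simp
  ring


/-- S(x) = x I'(x)/I(x) -/
noncomputable def Sf (ν x : ℝ) : ℝ := x * bI' ν x / besselI ν x

/-- φ(x) = S² + 3S - x² - ν² -/
noncomputable def phi (ν x : ℝ) : ℝ := (Sf ν x)^2 + 3 * Sf ν x - x^2 - ν^2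

lemma hasDerivAt_Sf (hν : 0 ≤ ν) (hx : 0 < x) :
    HasDerivAt (Sf ν) ((x^2 + ν^2 - (Sf ν x)^2) / x) x := by
  have hI := hasDerivAt_besselI hν hx
  have hI' := hasDerivAt_bI' hν hx
  have hApos := besselI_pos hν hx
  have hAne : besselI ν x ≠ 0 := hApos.ne'
  have h1 : HasDerivAt (fun y => y * bI' ν y) (1 * bI' ν x + x * bI'' ν x) x :=
    (hasDerivAt_id x).mul hI'
  have h2 := h1.div hI hAne
  have : Sf ν = fun y => y * bI' ν y / besselI ν y := rfl
  rw [this]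
  refine h2.congr_deriv (Eq.symm ?_)
  rw [bessel_ode hν hx]
  have hxne : x ≠ 0 := hx.ne'
  field_simp
  ring

lemma hasDerivAt_phi (hν : 0 ≤ ν) (hx : 0 < x) :
    HasDerivAt (phi ν) ((2 * Sf ν x + 3) * ((x^2 + ν^2 - (Sf ν x)^2) / x) - 2*x) x := by
  have hS := hasDerivAt_Sf hν hx
  have h1 : HasDerivAt (fun y => (Sf ν y)^2) ((2:ℕ) * (Sf ν x)^1 * ((x^2 + ν^2 - (Sf ν x)^2) / x)) x := hS.pow 2
  have h2 : HasDerivAt (fun y => 3 * Sf ν y) (3 * ((x^2 + ν^2 - (Sf ν x)^2) / x)) x := hS.const_mul 3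
  have h3 : HasDerivAt (fun y : ℝ => y^2) ((2:ℕ) * x^1) x := hasDerivAt_pow 2 x
  have h4 := ((h1.add h2).sub h3).sub_const (ν^2)
  have : phi ν = fun y => ((Sf ν y)^2 + 3 * Sf ν y - y^2) - ν^2 := by
    funext y
    show (Sf ν y)^2 + 3 * Sf ν y - y^2 - ν^2 = _
    ring
  rw [this]
  refine h4.congr_deriv (Eq.symm ?_)
  push_cast
  ring

lemma xbI'_eq (hν : 0 ≤ ν) (hx : 0 < x) :
    x * bI' ν x = ∑' k : ℕ, (ν + 2 * (k:ℝ)) * ((x / 2) ^ (ν + 2 * (k:ℝ)) /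
      ((Nat.factorial k : ℝ) * Real.Gamma (ν + (k:ℝ) + 1))) := by
  have hx2 : (0:ℝ) < x/2 := by linarith
  rw [bI', ← Summable.tsum_mul_left x (summable_bI' hν hx)]
  apply tsum_congr
  intro k
  have e1 : (x/2) ^ (ν + 2*(k:ℝ) - 1) = (x/2) ^ (ν + 2*(k:ℝ)) / (x/2) := by
    rw [Real.rpow_sub hx2, Real.rpow_one]
  rw [e1]
  have := (denom_pos' ν hν k).ne'
  field_simp

lemma summable_nu2k (hν : 0 ≤ ν) (hx : 0 < x) :
    Summable (fun k : ℕ => (ν + 2 * (k:ℝ)) * ((x / 2) ^ (ν + 2 * (k:ℝ)) /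
      ((Nat.factorial k : ℝ) * Real.Gamma (ν + (k:ℝ) + 1)))) := by
  apply summable_master ν 0 (ν+2) 1 hν (by linarith) zero_le_one (by positivity : (0:ℝ) < x/2)
  intro k
  have h3 := denom_pos' ν hν k
  have h2 : (0:ℝ) < (x/2) ^ (ν + 2*(k:ℝ)) := Real.rpow_pos_of_pos (by positivity) _
  have hk : (0:ℝ) ≤ (k:ℝ) := Nat.cast_nonneg k
  rw [add_zero, one_mul, abs_of_nonneg (by positivity), mul_div_assoc']
  apply div_le_div_of_nonneg_right ?_ h3.le
  nlinarith [mul_le_mul_of_nonneg_right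
    (show ν + 2*(k:ℝ) ≤ ((k:ℝ)+(ν+2))^2 by nlinarith) h2.le]

lemma Sf_ge (hν : 0 ≤ ν) (hx : 0 < x) : ν ≤ Sf ν x := by
  rw [Sf, le_div_iff₀ (besselI_pos hν hx)]
  rw [xbI'_eq hν hx]
  have h1 : ν * besselI ν x = ∑' k : ℕ, ν * ((x / 2) ^ (ν + 2 * (k:ℝ)) /
      ((Nat.factorial k : ℝ) * Real.Gamma (ν + (k:ℝ) + 1))) :=
    (Summable.tsum_mul_left ν (summable_bTerm hν hx)).symm
  rw [h1]
  apply Summable.tsum_le_tsum ?_ ((summable_bTerm hν hx).mul_left ν) (summable_nu2k hν hx)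
  intro k
  have h2 : (0:ℝ) < (x/2) ^ (ν + 2*(k:ℝ)) := Real.rpow_pos_of_pos (by positivity) _
  have h3 := denom_pos' ν hν k
  have hk : (0:ℝ) ≤ (k:ℝ) := Nat.cast_nonneg k
  apply mul_le_mul_of_nonneg_right (by linarith) (by positivity)

lemma Sf_pos (hν : 0 ≤ ν) (hx : 0 < x) : 0 < Sf ν x := by
  rw [Sf]
  exact div_pos (mul_pos hx (bI'_pos hν hx)) (besselI_pos hν hx)


lemma phi_pos_small_zero (hx : 0 < x) (hx1 : x ≤ 1) : 0 < phi 0 x := by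
  have hI := besselI_pos le_rfl hx
  have hS := Sf_pos le_rfl hx
  have h3S : x^2 < 3 * Sf 0 x := by
    rw [Sf]
    rw [show 3 * (x * bI' 0 x / besselI 0 x) = 3*(x * bI' 0 x)/besselI 0 x by ring]
    rw [lt_div_iff₀ hI]
    have hlow : x^2/2 ≤ x * bI' 0 x := by
      rw [xbI'_eq le_rfl hx]
      have hterm1 : ((0:ℝ) + 2 * ((1:ℕ):ℝ)) * ((x / 2) ^ ((0:ℝ) + 2 * ((1:ℕ):ℝ)) /
          ((Nat.factorial 1 : ℝ) * Real.Gamma ((0:ℝ) + ((1:ℕ):ℝ) + 1))) = x^2/2 := by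
        have e1 : ((0:ℝ) + 2 * ((1:ℕ):ℝ)) = (2:ℝ) := by norm_num
        have e2 : ((0:ℝ) + ((1:ℕ):ℝ) + 1) = (2:ℝ) := by norm_num
        rw [e1, e2, Real.Gamma_two, show (x/2) ^ (2:ℝ) = (x/2)^(2:ℕ) by
          rw [← Real.rpow_natCast (x/2) 2]; norm_num]
        norm_num
        ring
      calc x^2/2 = ((0:ℝ) + 2 * ((1:ℕ):ℝ)) * ((x / 2) ^ ((0:ℝ) + 2 * ((1:ℕ):ℝ)) /
          ((Nat.factorial 1 : ℝ) * Real.Gamma ((0:ℝ) + ((1:ℕ):ℝ) + 1))) := hterm1.symm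
        _ ≤ _ := by
          apply Summable.le_tsum (summable_nu2k le_rfl hx) 1
          intro j _
          have h2 : (0:ℝ) < (x/2) ^ ((0:ℝ) + 2*(j:ℝ)) := Real.rpow_pos_of_pos (by positivity) _
          have h3 := denom_pos' 0 le_rfl j
          positivity
    have hup : besselI 0 x ≤ 4/3 := by
      have hterm : ∀ k : ℕ, (x / 2) ^ ((0:ℝ) + 2 * (k:ℝ)) /
          ((Nat.factorial k : ℝ) * Real.Gamma ((0:ℝ) + (k:ℝ) + 1)) ≤ (1/4:ℝ)^k := by
        intro k
        have e1 : ((0:ℝ) + (k:ℝ) + 1) = ((k:ℕ):ℝ) + 1 := by push_cast; ring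
        have e2 : Real.Gamma ((0:ℝ) + (k:ℝ) + 1) = (Nat.factorial k : ℝ) := by
          rw [e1, Real.Gamma_nat_eq_factorial]
        have hfac1 : (1:ℝ) ≤ (Nat.factorial k : ℝ) := by
          exact_mod_cast Nat.one_le_iff_ne_zero.mpr (Nat.factorial_ne_zero k)
        have e3 : (x/2) ^ ((0:ℝ) + 2*(k:ℝ)) = ((x/2)^(2:ℕ))^k := by
          rw [show (0:ℝ) + 2*(k:ℝ) = ((2*k:ℕ):ℝ) by push_cast; ring,
            Real.rpow_natCast, pow_mul]
        rw [e2, e3]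
        have h4 : ((x/2)^(2:ℕ))^k ≤ (1/4:ℝ)^k := by
          apply pow_le_pow_left₀ (by positivity)
          nlinarith
        calc ((x/2)^(2:ℕ))^k / ((Nat.factorial k : ℝ) * (Nat.factorial k : ℝ))
            ≤ ((x/2)^(2:ℕ))^k / 1 := by
              apply div_le_div_of_nonneg_left (by positivity) (by norm_num)
              nlinarith
          _ = ((x/2)^(2:ℕ))^k := by norm_num
          _ ≤ (1/4:ℝ)^k := h4
      calc besselI 0 x ≤ ∑' k : ℕ, (1/4:ℝ)^k :=
            Summable.tsum_le_tsum hterm (summable_bTerm le_rfl hx) (summable_geometric_of_lt_one (by norm_num) (by norm_num))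
        _ = (1 - 1/4)⁻¹ := tsum_geometric_of_lt_one (by norm_num) (by norm_num)
        _ = 4/3 := by norm_num
    nlinarith
  rw [phi]
  nlinarith

lemma phi_pos_small_nu (hν : 0 < ν) (hx : 0 < x) (hx2 : x^2 < 3*ν) : 0 < phi ν x := by
  have hS := Sf_ge hν.le hx
  rw [phi]
  nlinarith

lemma phi_pos_near (hν : 0 ≤ ν) : ∃ ε : ℝ, 0 < ε ∧ ∀ y : ℝ, 0 < y → y < ε → 0 < phi ν y := by
  rcases eq_or_lt_of_le hν with h0 | h0
  · exact ⟨1, one_pos, fun y hy hy1 => by rw [← h0]; exact phi_pos_small_zero hy hy1.le⟩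
  · refine ⟨Real.sqrt (3*ν), Real.sqrt_pos.mpr (by linarith), fun y hy hylt => ?_⟩
    apply phi_pos_small_nu h0 hy
    have := Real.sq_sqrt (show (0:ℝ) ≤ 3*ν by linarith)
    nlinarith [pow_lt_pow_left₀ hylt (le_of_lt hy) (two_ne_zero)]

lemma phi_pos (hν : 0 ≤ ν) (hx : 0 < x) : 0 < phi ν x := by
  by_contra hcon
  push_neg at hcon
  obtain ⟨ε, hε0, hε⟩ := phi_pos_near (ν := ν) hν
  set b := x with hb
  have hbpos : 0 < b := hx
  have hphib : phi ν b ≤ 0 := hcon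
  have hεb : ε ≤ b := by
    by_contra h
    push_neg at h
    exact absurd (hε b hbpos h) (not_lt.mpr hphib)
  set A : Set ℝ := {y ∈ Icc (ε/2) b | phi ν y ≤ 0} with hA
  have hApos : ∀ y ∈ A, 0 < y := fun y hy => lt_of_lt_of_le (by linarith) hy.1.1
  have hcont : ContinuousOn (phi ν) (Icc (ε/2) b) := fun y hy =>
    ((hasDerivAt_phi hν (lt_of_lt_of_le (by linarith) hy.1)).continuousAt).continuousWithinAt
  have hclosed : IsClosed A :=
    hcont.preimage_isClosed_of_isClosed isClosed_Icc isClosed_Iic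
  have hAne : A.Nonempty := ⟨b, ⟨⟨by linarith, le_refl b⟩, hphib⟩⟩
  have hbdd : BddBelow A := ⟨ε/2, fun y hy => hy.1.1⟩
  set x₀ := sInf A with hx₀
  have hx₀A : x₀ ∈ A := hclosed.csInf_mem hAne hbdd
  have hx₀pos : 0 < x₀ := hApos x₀ hx₀A
  have hx₀half : ε/2 ≤ x₀ := hx₀A.1.1
  have hx₀b : x₀ ≤ b := hx₀A.1.2
  have hx₀phi : phi ν x₀ ≤ 0 := hx₀A.2
  have hx₀ε : ε ≤ x₀ := by
    by_contra h
    push_neg at h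
    exact absurd (hε x₀ hx₀pos h) (not_lt.mpr hx₀phi)
  have hleft : ∀ y : ℝ, 0 < y → y < x₀ → 0 < phi ν y := by
    intro y hy hylt
    rcases lt_or_ge y ε with h | h
    · exact hε y hy h
    · by_contra hcon2
      push_neg at hcon2
      have : y ∈ A := ⟨⟨by linarith, by linarith⟩, hcon2⟩
      exact absurd (csInf_le hbdd this) (not_le.mpr hylt)
  have hphix₀ : phi ν x₀ = 0 := by
    refine le_antisymm hx₀phi ?_
    have htendsto : Filter.Tendsto (phi ν) (nhdsWithin x₀ (Iio x₀)) (nhds (phi ν x₀)) :=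
      ((hasDerivAt_phi hν hx₀pos).continuousAt).continuousWithinAt
    have hev : ∀ᶠ y in nhdsWithin x₀ (Iio x₀), 0 ≤ phi ν y := by
      filter_upwards [Ioo_mem_nhdsLT hx₀pos]
      intro y hy
      exact (hleft y hy.1 hy.2).le
    exact ge_of_tendsto htendsto hev
  -- derivative at x₀ is ≤ 0 (left minimum) but computed > 0 : contradiction
  have hder := hasDerivAt_phi hν hx₀pos
  set S := Sf ν x₀ with hSdef
  have hSpos : 0 < S := Sf_pos hν hx₀pos
  set d := (2 * S + 3) * ((x₀^2 + ν^2 - S^2) / x₀) - 2*x₀ with hd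
  have hdpos : 0 < d := by
    have hphi0 : S^2 + 3*S - x₀^2 - ν^2 = 0 := hphix₀
    have h35 : x₀^2 + ν^2 - S^2 = 3*S := by linarith
    rw [hd, h35]
    rw [mul_div_assoc']
    rw [sub_pos, lt_div_iff₀ hx₀pos]
    nlinarith
  have hdle : d ≤ 0 := by
    have hw := (hder.hasDerivWithinAt (s := Iio x₀))
    rw [hasDerivWithinAt_iff_tendsto_slope] at hw
    have hdiff : Iio x₀ \ {x₀} = Iio x₀ := diff_singleton_eq_self (fun h => lt_irrefl x₀ h)
    rw [hdiff] at hw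
    have hev : ∀ᶠ y in nhdsWithin x₀ (Iio x₀), slope (phi ν) x₀ y ≤ 0 := by
      filter_upwards [Ioo_mem_nhdsLT hx₀pos]
      intro y hy
      rw [slope_def_field]
      rw [hphix₀]
      apply div_nonpos_of_nonneg_of_nonpos
      · simp [le_of_lt (hleft y hy.1 hy.2)]
      · linarith [hy.2]
    exact le_of_tendsto hw hev
  linarith


lemma hasDerivAt_hfun (hν : 0 ≤ ν) (hx : 0 < x) :
    HasDerivAt (fun y => bI' ν y / (y^2 * besselI ν y)) (-(phi ν x)/x^4) x := by
  have hI := hasDerivAt_besselI hν hx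
  have hI' := hasDerivAt_bI' hν hx
  have hApos := besselI_pos hν hx
  have hxne : x ≠ 0 := hx.ne'
  have h1 : HasDerivAt (fun y : ℝ => y^2 * besselI ν y)
      ((2:ℕ) * x^1 * besselI ν x + x^2 * bI' ν x) x := (hasDerivAt_pow 2 x).mul hI
  have hne : x^2 * besselI ν x ≠ 0 := (mul_pos (pow_pos hx 2) hApos).ne'
  have h2 := hI'.div h1 hne
  refine h2.congr_deriv (Eq.symm ?_)
  rw [bessel_ode hν hx]
  simp only [phi, Sf]
  field_simp
  ring

lemma hfun_strictAntiOn (hν : 0 ≤ ν) :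
    StrictAntiOn (fun y => bI' ν y / (y^2 * besselI ν y)) (Ioi 0) := by
  apply strictAntiOn_of_deriv_neg (convex_Ioi 0)
  · intro y hy
    exact ((hasDerivAt_hfun hν hy).continuousAt).continuousWithinAt
  · intro y hy
    rw [interior_Ioi] at hy
    rw [(hasDerivAt_hfun hν hy).deriv]
    have hy' : (0:ℝ) < y := hy
    have h1 := phi_pos hν hy'
    have h2 : (0:ℝ) < y^4 := pow_pos hy' 4
    apply div_neg_of_neg_of_pos (by linarith) h2

lemma deriv_besselI (hν : 0 ≤ ν) (hx : 0 < x) : deriv (besselI ν) x = bI' ν x :=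
  (hasDerivAt_besselI hν hx).deriv



lemma exp_cosh_bound {c μ t : ℝ} (hc : 0 < c) (hμ : 0 ≤ μ) (ht : 0 ≤ t) :
    Real.exp (-(c * Real.cosh t) + μ * t) ≤ Real.exp (2*(μ+1)^2/c) * Real.exp (-t) := by
  rw [← Real.exp_add]
  apply Real.exp_le_exp.mpr
  have h1 : (1 + t/2)^2 ≤ Real.exp t := by
    have h2 : 1 + t/2 ≤ Real.exp (t/2) := by linarith [Real.add_one_le_exp (t/2)]
    have h3 : (Real.exp (t/2))^2 = Real.exp t := by
      rw [sq, ← Real.exp_add]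
      ring_nf
    rw [← h3]
    apply pow_le_pow_left₀ (by linarith) h2
  have h4 : t^2/8 ≤ Real.cosh t := by
    rw [Real.cosh_eq]
    nlinarith [Real.exp_pos (-t), h1]
  have h5 : (μ+1) * t ≤ c * (t^2/8) + 2*(μ+1)^2/c := by
    have h6 : c*(t^2/8) + 2*(μ+1)^2/c = (c^2*t^2 + 16*(μ+1)^2)/(8*c) := by
      field_simp
      ring
    rw [h6, le_div_iff₀ (by positivity)]
    nlinarith [sq_nonneg (c*t - 4*(μ+1))]
  nlinarith [mul_le_mul_of_nonneg_left h4 hc.le]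

lemma cosh_le_exp_of_nonneg {t : ℝ} (ht : 0 ≤ t) : Real.cosh t ≤ Real.exp t := by
  rw [Real.cosh_eq]
  have := Real.exp_le_exp.mpr (show -t ≤ t by linarith)
  linarith

lemma integrand_bound {ν x t : ℝ} (hν : 0 ≤ ν) (hx : 0 < x) (ht : 0 ≤ t) :
    Real.exp (-x * Real.cosh t) * Real.cosh (ν * t)
      ≤ Real.exp (2*(ν+1)^2/x) * Real.exp (-t) := by
  have h1 : Real.cosh (ν * t) ≤ Real.exp (ν * t) := cosh_le_exp_of_nonneg (by positivity)
  calc Real.exp (-x * Real.cosh t) * Real.cosh (ν * t)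
      ≤ Real.exp (-x * Real.cosh t) * Real.exp (ν * t) := by
        apply mul_le_mul_of_nonneg_left h1 (Real.exp_pos _).le
    _ = Real.exp (-(x * Real.cosh t) + ν * t) := by rw [← Real.exp_add]; ring_nf
    _ ≤ _ := exp_cosh_bound hx hν ht

lemma integrand_deriv_bound {ν x t : ℝ} (hν : 0 ≤ ν) (hx : 0 < x) (ht : 0 ≤ t) :
    Real.cosh t * (Real.exp (-x * Real.cosh t) * Real.cosh (ν * t))
      ≤ Real.exp (2*(ν+2)^2/x) * Real.exp (-t) := by
  have h1 : Real.cosh (ν * t) ≤ Real.exp (ν * t) := cosh_le_exp_of_nonneg (by positivity)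
  have h2 : Real.cosh t ≤ Real.exp t := cosh_le_exp_of_nonneg ht
  have h3 : (0:ℝ) < Real.cosh t := Real.cosh_pos _
  have h4 : (0:ℝ) < Real.cosh (ν*t) := Real.cosh_pos _
  calc Real.cosh t * (Real.exp (-x * Real.cosh t) * Real.cosh (ν * t))
      ≤ Real.exp t * (Real.exp (-x * Real.cosh t) * Real.exp (ν * t)) := by
        apply mul_le_mul h2 (mul_le_mul_of_nonneg_left h1 (Real.exp_pos _).le)
          (by positivity) (Real.exp_pos _).le
    _ = Real.exp (-(x * Real.cosh t) + (ν+1) * t) := by rw [← Real.exp_add, ← Real.exp_add]; ring_nf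
    _ ≤ Real.exp (2*((ν+1)+1)^2/x) * Real.exp (-t) := exp_cosh_bound hx (by linarith) ht
    _ = Real.exp (2*(ν+2)^2/x) * Real.exp (-t) := by ring_nf

lemma integrable_Kintegrand {ν x : ℝ} (hν : 0 ≤ ν) (hx : 0 < x) :
    IntegrableOn (fun t => Real.exp (-x * Real.cosh t) * Real.cosh (ν * t)) (Ioi 0) := by
  have hg : IntegrableOn (fun t => Real.exp (2*(ν+1)^2/x) * Real.exp (-t)) (Ioi 0) := by
    have := exp_neg_integrableOn_Ioi 0 (show (0:ℝ) < 1 by norm_num)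
    simp only [neg_mul, one_mul] at this
    exact this.const_mul _
  apply Integrable.mono' hg
  · apply Continuous.aestronglyMeasurable
    continuity
  · filter_upwards [ae_restrict_mem measurableSet_Ioi]
    intro t ht
    rw [Real.norm_eq_abs, abs_of_pos (by positivity)]
    exact integrand_bound hν hx (le_of_lt ht)

lemma besselK_pos {ν x : ℝ} (hν : 0 ≤ ν) (hx : 0 < x) : 0 < besselK ν x := by
  rw [besselK]
  rw [setIntegral_pos_iff_support_of_nonneg_ae]
  · have hsupp : support (fun t => Real.exp (-x * Real.cosh t) * Real.cosh (ν * t)) = univ := by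
      apply eq_univ_of_forall
      intro t
      have h4 : (0:ℝ) < Real.cosh (ν*t) := Real.cosh_pos _
      exact ne_of_gt (by positivity)
    rw [hsupp, univ_inter]
    rw [Real.volume_Ioi]
    norm_num
  · filter_upwards with t
    have h4 : (0:ℝ) < Real.cosh (ν*t) := Real.cosh_pos _
    positivity
  · exact integrable_Kintegrand hν hx

lemma hasDerivAt_besselK {ν x : ℝ} (hν : 0 ≤ ν) (hx : 0 < x) :
    HasDerivAt (besselK ν)
      (∫ t in Ioi (0:ℝ), Real.exp (-x * Real.cosh t) * (-Real.cosh t) * Real.cosh (ν * t)) x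
    ∧ (∫ t in Ioi (0:ℝ), Real.exp (-x * Real.cosh t) * (-Real.cosh t) * Real.cosh (ν * t)) < 0 := by
  have hε : (0:ℝ) < x/2 := by linarith
  have key := hasDerivAt_integral_of_dominated_loc_of_deriv_le (μ := volume.restrict (Ioi 0))
    (F := fun (y : ℝ) (t : ℝ) => Real.exp (-y * Real.cosh t) * Real.cosh (ν * t))
    (F' := fun (y : ℝ) (t : ℝ) => Real.exp (-y * Real.cosh t) * (-Real.cosh t) * Real.cosh (ν * t))
    (x₀ := x) (s := Metric.ball x (x/2))
    (bound := fun t => Real.exp (2*(ν+2)^2/(x/2)) * Real.exp (-t))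
    (Metric.ball_mem_nhds x hε) ?_ (integrable_Kintegrand hν hx) ?_ ?_ ?_ ?_
  obtain ⟨hint, hderiv⟩ := key
  constructor
  · exact hderiv
  · -- negativity of the derivative integral
    have hpos : 0 < ∫ t in Ioi (0:ℝ),
        Real.exp (-x * Real.cosh t) * Real.cosh t * Real.cosh (ν * t) := by
      rw [setIntegral_pos_iff_support_of_nonneg_ae]
      · have hsupp : support (fun t => Real.exp (-x * Real.cosh t) * Real.cosh t * Real.cosh (ν * t)) = univ := by
          apply eq_univ_of_forall
          intro t
          have h4 : (0:ℝ) < Real.cosh (ν*t) := Real.cosh_pos _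
          have h5 : (0:ℝ) < Real.cosh t := Real.cosh_pos _
          exact ne_of_gt (by positivity)
        rw [hsupp, univ_inter, Real.volume_Ioi]
        norm_num
      · filter_upwards with t
        have h4 : (0:ℝ) < Real.cosh (ν*t) := Real.cosh_pos _
        have h5 : (0:ℝ) < Real.cosh t := Real.cosh_pos _
        positivity
      · have := hint.neg
        apply this.congr
        filter_upwards with t
        simp only [Pi.neg_apply]
        ring
    have heq : ∫ t in Ioi (0:ℝ), Real.exp (-x * Real.cosh t) * (-Real.cosh t) * Real.cosh (ν * t)
        = -∫ t in Ioi (0:ℝ), Real.exp (-x * Real.cosh t) * Real.cosh t * Real.cosh (ν * t) := by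
      rw [← integral_neg]
      apply integral_congr_ae
      filter_upwards with t
      ring
    rw [heq]
    linarith
  · -- measurability of F y
    filter_upwards with y
    apply Continuous.aestronglyMeasurable
    continuity
  · -- measurability of F' x
    apply Continuous.aestronglyMeasurable
    continuity
  · -- bound
    filter_upwards [ae_restrict_mem measurableSet_Ioi]
    intro t ht y hy
    have hy2 : x/2 < y := by
      have := abs_lt.mp (mem_ball_iff_norm.mp hy)
      linarith [this.1]
    rw [Real.norm_eq_abs]
    have h4 : (0:ℝ) < Real.cosh (ν*t) := Real.cosh_pos _
    have h5 : (0:ℝ) < Real.cosh t := Real.cosh_pos _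
    have habs : |Real.exp (-y * Real.cosh t) * (-Real.cosh t) * Real.cosh (ν * t)|
        = Real.cosh t * (Real.exp (-y * Real.cosh t) * Real.cosh (ν * t)) := by
      rw [abs_of_nonpos (by nlinarith [mul_pos (mul_pos (Real.exp_pos (-y * Real.cosh t)) h5) h4])]
      ring
    rw [habs]
    calc Real.cosh t * (Real.exp (-y * Real.cosh t) * Real.cosh (ν * t))
        ≤ Real.cosh t * (Real.exp (-(x/2) * Real.cosh t) * Real.cosh (ν * t)) := by
          apply mul_le_mul_of_nonneg_left ?_ h5.le
          apply mul_le_mul_of_nonneg_right ?_ h4.le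
          apply Real.exp_le_exp.mpr
          nlinarith
      _ ≤ _ := integrand_deriv_bound hν (by linarith) (le_of_lt ht)
  · -- bound integrable
    have := exp_neg_integrableOn_Ioi 0 (show (0:ℝ) < 1 by norm_num)
    simp only [neg_mul, one_mul] at this
    exact this.const_mul _
  · -- HasDerivAt in y
    filter_upwards with t
    intro y hy
    have h1 : HasDerivAt (fun y : ℝ => -y * Real.cosh t) (-Real.cosh t) y := by
      simpa using ((hasDerivAt_id y).neg.mul_const (Real.cosh t))
    have h2 := (Real.hasDerivAt_exp (-y * Real.cosh t)).comp y h1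
    exact h2.mul_const (Real.cosh (ν * t))

lemma deriv_besselK_neg {ν x : ℝ} (hν : 0 ≤ ν) (hx : 0 < x) : deriv (besselK ν) x < 0 := by
  obtain ⟨h1, h2⟩ := hasDerivAt_besselK hν hx
  rw [h1.deriv]
  exact h2


end BesselAux

open BesselAux in
theorem rho_injective (ν r₁ σ₁ σ₂ : ℝ) (hν : 0 ≤ ν) (hr₁ : r₁ ∈ Set.Ioo (0 : ℝ) 1)
    (hσ₁ : 0 < σ₁) (hσ₂ : 0 < σ₂)
    (hden₁ : σ₁ * deriv (besselI ν) (r₁ / Real.sqrt σ₁) * besselK ν r₁ -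
      besselI ν (r₁ / Real.sqrt σ₁) * deriv (besselK ν) r₁ ≠ 0)
    (hden₂ : σ₂ * deriv (besselI ν) (r₁ / Real.sqrt σ₂) * besselK ν r₁ -
      besselI ν (r₁ / Real.sqrt σ₂) * deriv (besselK ν) r₁ ≠ 0)
    (heq : (σ₁ * deriv (besselI ν) (r₁ / Real.sqrt σ₁) * besselI ν r₁ -
        besselI ν (r₁ / Real.sqrt σ₁) * deriv (besselI ν) r₁) /
      (σ₁ * deriv (besselI ν) (r₁ / Real.sqrt σ₁) * besselK ν r₁ -
        besselI ν (r₁ / Real.sqrt σ₁) * deriv (besselK ν) r₁) =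
      (σ₂ * deriv (besselI ν) (r₁ / Real.sqrt σ₂) * besselI ν r₁ -
        besselI ν (r₁ / Real.sqrt σ₂) * deriv (besselI ν) r₁) /
      (σ₂ * deriv (besselI ν) (r₁ / Real.sqrt σ₂) * besselK ν r₁ -
        besselI ν (r₁ / Real.sqrt σ₂) * deriv (besselK ν) r₁)) :
    σ₁ = σ₂ := by
  obtain ⟨hr, hr1⟩ := hr₁
  have hs₁ : 0 < Real.sqrt σ₁ := Real.sqrt_pos.mpr hσ₁
  have hs₂ : 0 < Real.sqrt σ₂ := Real.sqrt_pos.mpr hσ₂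
  set x₁ : ℝ := r₁ / Real.sqrt σ₁ with hx₁def
  set x₂ : ℝ := r₁ / Real.sqrt σ₂ with hx₂def
  have hx₁ : 0 < x₁ := div_pos hr hs₁
  have hx₂ : 0 < x₂ := div_pos hr hs₂
  rw [deriv_besselI hν hx₁] at heq hden₁
  rw [deriv_besselI hν hx₂] at heq hden₂
  rw [deriv_besselI hν hr] at heq
  -- positivity facts at r₁
  have hP : 0 < besselI ν r₁ := besselI_pos hν hr
  have hP' : 0 < bI' ν r₁ := bI'_pos hν hr
  have hQ : 0 < besselK ν r₁ := besselK_pos hν hr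
  have hQ' : deriv (besselK ν) r₁ < 0 := deriv_besselK_neg hν hr
  have hI₁ : 0 < besselI ν x₁ := besselI_pos hν hx₁
  have hI₂ : 0 < besselI ν x₂ := besselI_pos hν hx₂
  -- cross-multiplied equation
  have hND := (div_eq_div_iff hden₁ hden₂).mp heq
  -- Wronskian-type positive factor
  have hW : 0 < bI' ν r₁ * besselK ν r₁ - besselI ν r₁ * deriv (besselK ν) r₁ := by
    nlinarith [mul_pos hP' hQ, mul_pos hP (neg_pos.mpr hQ')]
  have key : (σ₁ * bI' ν x₁ * besselI ν x₂ - σ₂ * bI' ν x₂ * besselI ν x₁) *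
      (bI' ν r₁ * besselK ν r₁ - besselI ν r₁ * deriv (besselK ν) r₁) = 0 := by
    linear_combination hND
  have hab : σ₁ * bI' ν x₁ * besselI ν x₂ = σ₂ * bI' ν x₂ * besselI ν x₁ := by
    rcases mul_eq_zero.mp key with h | h
    · linarith
    · exact absurd h hW.ne'
  -- σᵢ xᵢ² = r₁²
  have h1 : x₁^2 * σ₁ = r₁^2 := by
    rw [hx₁def, div_pow, Real.sq_sqrt hσ₁.le]
    field_simp
  have h2 : x₂^2 * σ₂ = r₁^2 := by
    rw [hx₂def, div_pow, Real.sq_sqrt hσ₂.le]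
    field_simp
  -- h(x₁) = h(x₂)
  have h10 : r₁^2 * (bI' ν x₁ * (x₂^2 * besselI ν x₂) - bI' ν x₂ * (x₁^2 * besselI ν x₁)) = 0 := by
    linear_combination (x₁^2 * x₂^2) * hab - (bI' ν x₁ * (x₂^2 * besselI ν x₂)) * h1 +
      (bI' ν x₂ * (x₁^2 * besselI ν x₁)) * h2
  have h11 : bI' ν x₁ * (x₂^2 * besselI ν x₂) = bI' ν x₂ * (x₁^2 * besselI ν x₁) := by
    rcases mul_eq_zero.mp h10 with h | h
    · exact absurd h (pow_ne_zero 2 hr.ne')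
    · linarith
  have hfe : bI' ν x₁ / (x₁^2 * besselI ν x₁) = bI' ν x₂ / (x₂^2 * besselI ν x₂) := by
    rw [div_eq_div_iff (by positivity) (by positivity)]
    exact h11
  have hxeq : x₁ = x₂ :=
    (hfun_strictAntiOn hν).injOn (mem_Ioi.mpr hx₁) (mem_Ioi.mpr hx₂) hfe
  -- conclude σ₁ = σ₂
  have hsq : Real.sqrt σ₁ = Real.sqrt σ₂ := by
    rw [hx₁def, hx₂def, div_eq_div_iff hs₁.ne' hs₂.ne'] at hxeq
    exact (mul_left_cancel₀ hr.ne' hxeq).symm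
  calc σ₁ = (Real.sqrt σ₁)^2 := (Real.sq_sqrt hσ₁.le).symm
    _ = (Real.sqrt σ₂)^2 := by rw [hsq]
    _ = σ₂ := Real.sq_sqrt hσ₂.le
end
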